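/- arXiv:2212.14782 — 3 statements merged into one kernel-verified Lean document; each statement's English description precedes it below -/
import Mathlib

section
/- For every M > 0 there exists a constant C > 0, depending only on K, M, n, α, β and m, such that for all t > 0 and all y ∈ ℝⁿ with |y| ≤ Mt, one has m(2t, 0, 2y) ≤ 2 m(t, 0, y) + C. -/
open MeasureTheory Filter

noncomputable section

/-- A pair `(η, η')` is admissible on `[a, b]`: the candidate derivative `η'` is interval
integrable and `η` is its indefinite integral, i.e. `η` is absolutely continuous on `[a, b]`
with a.e. derivative `η'`. -/
def AdmissibleOn (n : ℕ) (a b : ℝ) (η η' : ℝ → EuclideanSpace ℝ (Fin n)) : Prop :=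
  IntervalIntegrable η' volume a b ∧
    ∀ s ∈ Set.Icc a b, η s = η a + ∫ u in a..s, η' u

/-- The structural hypotheses on the Lagrangian `L`: continuity, `ℤ^(n+1)`-periodicity in the
first two (space-time) arguments, convexity in the velocity argument, and two-sided growth
bounds of order `m`. -/
structure IsLagrangian (n : ℕ) (α β K m : ℝ)
    (L : EuclideanSpace ℝ (Fin n) → ℝ → EuclideanSpace ℝ (Fin n) → ℝ) : Prop where
  cont : Continuous fun q : (EuclideanSpace ℝ (Fin n)) × ℝ × (EuclideanSpace ℝ (Fin n)) =>
    L q.1 q.2.1 q.2.2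
  periodic : ∀ (x v : EuclideanSpace ℝ (Fin n)) (t : ℝ) (w : Fin n → ℤ) (j : ℤ),
    L (WithLp.toLp 2 (fun i => x i + (w i : ℝ))) (t + j) v = L x t v
  convexV : ∀ x t, ConvexOn ℝ Set.univ (fun v => L x t v)
  lower_bound : ∀ x t v, α * ‖v‖ ^ m - K ≤ L x t v
  upper_bound : ∀ x t v, L x t v ≤ β * ‖v‖ ^ m + K

/-- The minimal cost `m(t, x, y)` to travel from `x` to `y` in time `t`, i.e. the infimum of
`∫_0^t L(η(s), s, η'(s)) ds` over absolutely continuous curves `η : [0, t] → ℝⁿ` with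
`η 0 = x` and `η t = y` (and a well-defined, i.e. integrable, Lagrangian cost). -/
def mCost (n : ℕ) (L : EuclideanSpace ℝ (Fin n) → ℝ → EuclideanSpace ℝ (Fin n) → ℝ)
    (t : ℝ) (x y : EuclideanSpace ℝ (Fin n)) : ℝ :=
  sInf {c : ℝ | ∃ η η' : ℝ → EuclideanSpace ℝ (Fin n),
    AdmissibleOn n 0 t η η' ∧ η 0 = x ∧ η t = y ∧
    IntervalIntegrable (fun s => L (η s) s (η' s)) volume 0 t ∧
    c = ∫ s in (0:ℝ)..t, L (η s) s (η' s)}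

namespace McostSub

/-- Gluing two functions at a point. -/
def glue {X : Type*} (b : ℝ) (f g : ℝ → X) : ℝ → X := fun s => if s ≤ b then f s else g s

theorem glue_left {X : Type*} {b s : ℝ} (f g : ℝ → X) (h : s ≤ b) : glue b f g s = f s :=
  if_pos h

theorem glue_right {X : Type*} {b s : ℝ} (f g : ℝ → X) (h : b < s) : glue b f g s = g s :=
  if_neg (not_le.2 h)

theorem glue_right' {X : Type*} {b s : ℝ} (f g : ℝ → X) (h : b ≤ s) (hfg : f b = g b) :
    glue b f g s = g s := by
  rcases lt_or_eq_of_le h with h | h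
  · exact glue_right f g h
  · rw [← h, glue_left f g le_rfl, hfg]

variable {n : ℕ}

theorem glue_adm {a b c : ℝ} (hab : a ≤ b) (hbc : b ≤ c)
    {η₁ η₁' η₂ η₂' : ℝ → EuclideanSpace ℝ (Fin n)}
    (h₁ : AdmissibleOn n a b η₁ η₁') (h₂ : AdmissibleOn n b c η₂ η₂')
    (hm : η₂ b = η₁ b) :
    AdmissibleOn n a c (glue b η₁ η₂) (glue b η₁' η₂') := by
  have hi₁ : IntervalIntegrable (glue b η₁' η₂') volume a b := by
    refine h₁.1.congr ?_
    intro s hs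
    rw [Set.uIoc_of_le hab] at hs
    exact (glue_left _ _ hs.2).symm
  have hi₂ : IntervalIntegrable (glue b η₁' η₂') volume b c := by
    refine h₂.1.congr ?_
    intro s hs
    rw [Set.uIoc_of_le hbc] at hs
    exact (glue_right _ _ hs.1).symm
  refine ⟨hi₁.trans hi₂, ?_⟩
  intro s hs
  have hga : glue b η₁ η₂ a = η₁ a := glue_left _ _ hab
  by_cases hsb : s ≤ b
  · have h1 := h₁.2 s ⟨hs.1, hsb⟩
    have e1 : ∫ u in a..s, glue b η₁' η₂' u = ∫ u in a..s, η₁' u := by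
      refine intervalIntegral.integral_congr_ae (Eventually.of_forall fun x hx => ?_)
      rw [Set.uIoc_of_le hs.1] at hx
      exact glue_left _ _ (hx.2.trans hsb)
    rw [glue_left _ _ hsb, hga, e1, h1]
  · push_neg at hsb
    have h2 := h₂.2 s ⟨hsb.le, hs.2⟩
    have e2 : ∫ u in b..s, glue b η₁' η₂' u = ∫ u in b..s, η₂' u := by
      refine intervalIntegral.integral_congr_ae (Eventually.of_forall fun x hx => ?_)
      rw [Set.uIoc_of_le hsb.le] at hx
      exact glue_right _ _ hx.1
    have e1 : ∫ u in a..b, glue b η₁' η₂' u = ∫ u in a..b, η₁' u := by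
      refine intervalIntegral.integral_congr_ae (Eventually.of_forall fun x hx => ?_)
      rw [Set.uIoc_of_le hab] at hx
      exact glue_left _ _ hx.2
    have hsplit : (∫ u in a..b, glue b η₁' η₂' u) + ∫ u in b..s, glue b η₁' η₂' u
        = ∫ u in a..s, glue b η₁' η₂' u := by
      refine intervalIntegral.integral_add_adjacent_intervals hi₁ (hi₂.mono_set ?_)
      rw [Set.uIcc_of_le hsb.le, Set.uIcc_of_le hbc]
      exact Set.Icc_subset_Icc le_rfl hs.2
    rw [glue_right _ _ hsb, hga, h2, hm, h₁.2 b ⟨hab, le_rfl⟩, ← hsplit, e1, e2, add_assoc]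

theorem glue_cost {a b c : ℝ} (hab : a ≤ b) (hbc : b ≤ c)
    {L : EuclideanSpace ℝ (Fin n) → ℝ → EuclideanSpace ℝ (Fin n) → ℝ}
    {η₁ η₁' η₂ η₂' : ℝ → EuclideanSpace ℝ (Fin n)}
    (hc₁ : IntervalIntegrable (fun s => L (η₁ s) s (η₁' s)) volume a b)
    (hc₂ : IntervalIntegrable (fun s => L (η₂ s) s (η₂' s)) volume b c) :
    IntervalIntegrable (fun s => L (glue b η₁ η₂ s) s (glue b η₁' η₂' s)) volume a c ∧
    ∫ s in a..c, L (glue b η₁ η₂ s) s (glue b η₁' η₂' s)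
      = (∫ s in a..b, L (η₁ s) s (η₁' s)) + ∫ s in b..c, L (η₂ s) s (η₂' s) := by
  have e₁ : ∀ x ∈ Set.uIoc a b,
      L (η₁ x) x (η₁' x) = L (glue b η₁ η₂ x) x (glue b η₁' η₂' x) := by
    intro x hx
    rw [Set.uIoc_of_le hab] at hx
    rw [glue_left _ _ hx.2, glue_left _ _ hx.2]
  have e₂ : ∀ x ∈ Set.uIoc b c,
      L (η₂ x) x (η₂' x) = L (glue b η₁ η₂ x) x (glue b η₁' η₂' x) := by
    intro x hx
    rw [Set.uIoc_of_le hbc] at hx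
    rw [glue_right _ _ hx.1, glue_right _ _ hx.1]
  have hi₁ : IntervalIntegrable (fun s => L (glue b η₁ η₂ s) s (glue b η₁' η₂' s)) volume a b := by
    refine hc₁.congr ?_
    intro s hs
    exact e₁ s hs
  have hi₂ : IntervalIntegrable (fun s => L (glue b η₁ η₂ s) s (glue b η₁' η₂' s)) volume b c := by
    refine hc₂.congr ?_
    intro s hs
    exact e₂ s hs
  refine ⟨hi₁.trans hi₂, ?_⟩
  rw [← intervalIntegral.integral_add_adjacent_intervals hi₁ hi₂]
  congr 1
  · exact (intervalIntegral.integral_congr_ae (Eventually.of_forall e₁)).symm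
  · exact (intervalIntegral.integral_congr_ae (Eventually.of_forall e₂)).symm

/-- Straight-line segment. -/
def lineSeg (a b : ℝ) (p q : EuclideanSpace ℝ (Fin n)) : ℝ → EuclideanSpace ℝ (Fin n) :=
  fun s => p + ((s - a) / (b - a)) • (q - p)

def lineVel (a b : ℝ) (p q : EuclideanSpace ℝ (Fin n)) : ℝ → EuclideanSpace ℝ (Fin n) :=
  fun _ => (b - a)⁻¹ • (q - p)

theorem lineSeg_left {a b : ℝ} (hab : a < b) (p q : EuclideanSpace ℝ (Fin n)) :
    lineSeg a b p q a = p := by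
  simp [lineSeg]

theorem lineSeg_right {a b : ℝ} (hab : a < b) (p q : EuclideanSpace ℝ (Fin n)) :
    lineSeg a b p q b = q := by
  have : (b - a) / (b - a) = 1 := div_self (by linarith)
  simp [lineSeg, this]

theorem line_adm {a b : ℝ} (hab : a < b) (p q : EuclideanSpace ℝ (Fin n)) :
    AdmissibleOn n a b (lineSeg a b p q) (lineVel a b p q) := by
  constructor
  · exact intervalIntegrable_const
  · intro s hs
    simp only [lineVel, lineSeg]
    rw [intervalIntegral.integral_const, sub_self, zero_div, zero_smul, add_zero,
      smul_smul, div_eq_mul_inv]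

theorem line_cost {a b : ℝ} (hab : a < b) (p q : EuclideanSpace ℝ (Fin n))
    {α β K m : ℝ} {L : EuclideanSpace ℝ (Fin n) → ℝ → EuclideanSpace ℝ (Fin n) → ℝ}
    (hL : IsLagrangian n α β K m L) :
    IntervalIntegrable (fun s => L (lineSeg a b p q s) s (lineVel a b p q s)) volume a b ∧
    ∫ s in a..b, L (lineSeg a b p q s) s (lineVel a b p q s)
      ≤ (b - a) * (β * ‖(b - a)⁻¹ • (q - p)‖ ^ m + K) := by
  have hcont : Continuous fun s => L (lineSeg a b p q s) s (lineVel a b p q s) := by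
    have h1 : Continuous fun s : ℝ => lineSeg a b p q s := by
      unfold lineSeg
      fun_prop
    exact hL.cont.comp (h1.prodMk (continuous_id.prodMk continuous_const))
  have hint : IntervalIntegrable (fun s => L (lineSeg a b p q s) s (lineVel a b p q s)) volume a b :=
    hcont.intervalIntegrable a b
  refine ⟨hint, ?_⟩
  have hmono := intervalIntegral.integral_mono_on (g := fun _ => β * ‖(b - a)⁻¹ • (q - p)‖ ^ m + K)
    hab.le hint intervalIntegrable_const
    (fun x _ => by simpa [lineVel] using hL.upper_bound (lineSeg a b p q x) x (lineVel a b p q x))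
  rw [intervalIntegral.integral_const, smul_eq_mul] at hmono
  exact hmono

theorem shift_pieces {t u₁ u₂ : ℝ} (hu₁ : 0 ≤ u₁) (hu : u₁ ≤ u₂) (hu₂ : u₂ ≤ t)
    {η η' : ℝ → EuclideanSpace ℝ (Fin n)} (h : AdmissibleOn n 0 t η η')
    {L : EuclideanSpace ℝ (Fin n) → ℝ → EuclideanSpace ℝ (Fin n) → ℝ}
    (hL : ∀ (x v : EuclideanSpace ℝ (Fin n)) (t : ℝ) (w : Fin n → ℤ) (j : ℤ),
      L (WithLp.toLp 2 (fun i => x i + (w i : ℝ))) (t + j) v = L x t v)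
    (hf : IntervalIntegrable (fun s => L (η s) s (η' s)) volume 0 t)
    (w : Fin n → ℤ) (j : ℤ) :
    AdmissibleOn n (u₁ + j) (u₂ + j)
      (fun s => (WithLp.toLp 2 (fun i => η (s - j) i + (w i : ℝ)) : EuclideanSpace ℝ (Fin n)))
      (fun s => η' (s - j)) ∧
    IntervalIntegrable
      (fun s => L (WithLp.toLp 2 (fun i => η (s - j) i + (w i : ℝ))) s (η' (s - j))) volume (u₁ + j) (u₂ + j) ∧
    ∫ s in (u₁ + (j:ℝ))..(u₂ + (j:ℝ)), L (WithLp.toLp 2 (fun i => η (s - j) i + (w i : ℝ))) s (η' (s - j))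
      = ∫ u in u₁..u₂, L (η u) u (η' u) := by
  have hu₂t : u₂ ≤ t := hu₂
  have h0u₂ : (0:ℝ) ≤ u₂ := hu₁.trans hu
  have key : ∀ s : ℝ, L (WithLp.toLp 2 (fun i => η (s - (j:ℝ)) i + (w i : ℝ))) s (η' (s - (j:ℝ)))
      = L (η (s - (j:ℝ))) (s - (j:ℝ)) (η' (s - (j:ℝ))) := by
    intro s
    have h := hL (η (s - (j:ℝ))) (η' (s - (j:ℝ))) (s - (j:ℝ)) w j
    rwa [sub_add_cancel] at h
  have hsub : Set.uIcc u₁ u₂ ⊆ Set.uIcc 0 t := by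
    rw [Set.uIcc_of_le hu, Set.uIcc_of_le (h0u₂.trans hu₂t)]
    exact Set.Icc_subset_Icc hu₁ hu₂t
  have hη' : IntervalIntegrable (fun s => η' (s - (j:ℝ))) volume (u₁ + j) (u₂ + j) :=
    (h.1.mono_set hsub).comp_sub_right (j:ℝ)
  refine ⟨⟨hη', ?_⟩, ?_, ?_⟩
  · intro s hs
    have hσ1 : u₁ ≤ s - (j:ℝ) := by have := hs.1; linarith
    have hσ2 : s - (j:ℝ) ≤ u₂ := by have := hs.2; linarith
    have hsub1 : Set.uIcc 0 u₁ ⊆ Set.uIcc 0 t := by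
      rw [Set.uIcc_of_le hu₁, Set.uIcc_of_le (h0u₂.trans hu₂t)]
      exact Set.Icc_subset_Icc le_rfl (hu.trans hu₂t)
    have hsub2 : Set.uIcc u₁ (s - (j:ℝ)) ⊆ Set.uIcc 0 t := by
      rw [Set.uIcc_of_le hσ1, Set.uIcc_of_le (h0u₂.trans hu₂t)]
      exact Set.Icc_subset_Icc hu₁ (hσ2.trans hu₂t)
    have hadd : (∫ u in (0:ℝ)..u₁, η' u) + ∫ u in u₁..(s - (j:ℝ)), η' u
        = ∫ u in (0:ℝ)..(s - (j:ℝ)), η' u :=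
      intervalIntegral.integral_add_adjacent_intervals (h.1.mono_set hsub1)
        (h.1.mono_set hsub2)
    have hησ : η (s - (j:ℝ)) = η u₁ + ∫ u in u₁..(s - (j:ℝ)), η' u := by
      rw [h.2 u₁ ⟨hu₁, hu.trans hu₂t⟩, add_assoc, hadd]
      exact h.2 (s - (j:ℝ)) ⟨hu₁.trans hσ1, hσ2.trans hu₂t⟩
    have hieq : (∫ u in (u₁ + (j:ℝ))..s, η' (u - (j:ℝ))) = ∫ u in u₁..(s - (j:ℝ)), η' u := by
      have h2 := intervalIntegral.integral_comp_sub_right (a := u₁ + (j:ℝ)) (b := s)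
        (fun u => η' u) (j:ℝ)
      rwa [add_sub_cancel_right] at h2
    have hb0 : u₁ + (j:ℝ) - (j:ℝ) = u₁ := add_sub_cancel_right _ _
    simp only [hb0, hieq, hησ]
    ext i
    simp only [PiLp.add_apply, PiLp.toLp_apply]
    ring
  · simp only [key]
    exact (hf.mono_set hsub).comp_sub_right (j:ℝ)
  · simp only [key]
    have h2 := intervalIntegral.integral_comp_sub_right (a := u₁ + (j:ℝ)) (b := u₂ + (j:ℝ))
      (fun u => L (η u) u (η' u)) (j:ℝ)
    rw [add_sub_cancel_right, add_sub_cancel_right] at h2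
    exact h2

theorem elem_lower_bound {α β K m : ℝ} (hα : 0 < α)
    {L : EuclideanSpace ℝ (Fin n) → ℝ → EuclideanSpace ℝ (Fin n) → ℝ}
    (hL : IsLagrangian n α β K m L) {t : ℝ} (ht : 0 ≤ t) (x y : EuclideanSpace ℝ (Fin n))
    {c : ℝ} (hc : c ∈ {c : ℝ | ∃ η η' : ℝ → EuclideanSpace ℝ (Fin n),
      AdmissibleOn n 0 t η η' ∧ η 0 = x ∧ η t = y ∧
      IntervalIntegrable (fun s => L (η s) s (η' s)) volume 0 t ∧
      c = ∫ s in (0:ℝ)..t, L (η s) s (η' s)}) :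
    -K * t ≤ c := by
  obtain ⟨η, η', hadm, hx, hy, hint, rfl⟩ := hc
  have hmono := intervalIntegral.integral_mono_on (f := fun _ => -K) (μ := volume) ht
    intervalIntegrable_const hint
    (fun x _ => by
      have h1 := hL.lower_bound (η x) x (η' x)
      have h2 : 0 ≤ α * ‖η' x‖ ^ m := mul_nonneg hα.le (Real.rpow_nonneg (norm_nonneg (η' x)) m)
      show -K ≤ L (η x) x (η' x)
      linarith)
  rw [intervalIntegral.integral_const, sub_zero, smul_eq_mul] at hmono
  linarith

theorem straight_mem {α β K m : ℝ}
    {L : EuclideanSpace ℝ (Fin n) → ℝ → EuclideanSpace ℝ (Fin n) → ℝ}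
    (hL : IsLagrangian n α β K m L) {t : ℝ} (ht : 0 < t) (x y : EuclideanSpace ℝ (Fin n)) :
    ∃ c ∈ {c : ℝ | ∃ η η' : ℝ → EuclideanSpace ℝ (Fin n),
      AdmissibleOn n 0 t η η' ∧ η 0 = x ∧ η t = y ∧
      IntervalIntegrable (fun s => L (η s) s (η' s)) volume 0 t ∧
      c = ∫ s in (0:ℝ)..t, L (η s) s (η' s)},
      c ≤ t * (β * ‖t⁻¹ • (y - x)‖ ^ m + K) := by
  refine ⟨∫ s in (0:ℝ)..t, L (lineSeg 0 t x y s) s (lineVel 0 t x y s),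
    ⟨lineSeg 0 t x y, lineVel 0 t x y, line_adm ht x y, lineSeg_left ht x y,
      lineSeg_right ht x y, (line_cost ht x y hL).1, rfl⟩, ?_⟩
  have h2 := (line_cost ht x y hL).2
  simp only [sub_zero] at h2
  exact h2

theorem line_cost_le {a b : ℝ} (hab : a < b) (h1 : 1 ≤ b - a) (h2 : b - a ≤ 2)
    {p q : EuclideanSpace ℝ (Fin n)} {D : ℝ} (hd : ‖q - p‖ ≤ D)
    {α β K m : ℝ} (hβ : 0 < β) (hK : 0 < K) (hm0 : 0 ≤ m)
    {L : EuclideanSpace ℝ (Fin n) → ℝ → EuclideanSpace ℝ (Fin n) → ℝ}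
    (hL : IsLagrangian n α β K m L) :
    ∫ s in a..b, L (lineSeg a b p q s) s (lineVel a b p q s) ≤ 2 * (β * D ^ m + K) := by
  refine (line_cost hab p q hL).2.trans ?_
  have hba0 : (0:ℝ) < b - a := by linarith
  have hv : ‖(b - a)⁻¹ • (q - p)‖ ≤ D := by
    rw [norm_smul, Real.norm_eq_abs, abs_inv, abs_of_pos hba0]
    calc (b - a)⁻¹ * ‖q - p‖ ≤ 1 * D :=
          mul_le_mul (inv_le_one_of_one_le₀ h1) hd (norm_nonneg _) zero_le_one
      _ = D := one_mul _
  have hrp : ‖(b - a)⁻¹ • (q - p)‖ ^ m ≤ D ^ m := Real.rpow_le_rpow (norm_nonneg _) hv hm0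
  have h0 : (0:ℝ) ≤ β * ‖(b - a)⁻¹ • (q - p)‖ ^ m + K :=
    add_nonneg (mul_nonneg hβ.le (Real.rpow_nonneg (norm_nonneg _) m)) hK.le
  calc (b - a) * (β * ‖(b - a)⁻¹ • (q - p)‖ ^ m + K)
      ≤ 2 * (β * ‖(b - a)⁻¹ • (q - p)‖ ^ m + K) := mul_le_mul_of_nonneg_right h2 h0
    _ ≤ 2 * (β * D ^ m + K) := by nlinarith [hrp]

end McostSub

set_option maxHeartbeats 2000000 in
/-- Approximate subadditivity (Lemma 2.2(ii)): for every `M > 0` there is a constant `C > 0`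
depending only on `K, M, n, α, β, m` such that `m(2t, 0, 2y) ≤ 2 m(t, 0, y) + C` whenever
`t > 0` and `|y| ≤ M t`. -/
theorem mCost_subadditive (n : ℕ) (hn : 1 ≤ n) (α β K m : ℝ)
    (hα : 0 < α) (hβ : 0 < β) (hK : 0 < K) (hm : 1 < m) (M : ℝ) (hM : 0 < M) :
    ∃ C > 0,
      ∀ L : EuclideanSpace ℝ (Fin n) → ℝ → EuclideanSpace ℝ (Fin n) → ℝ,
        IsLagrangian n α β K m L →
        ∀ t : ℝ, 0 < t → ∀ y : EuclideanSpace ℝ (Fin n), ‖y‖ ≤ M * t →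
          mCost n L (2 * t) 0 ((2 : ℝ) • y) ≤ 2 * mCost n L t 0 y + C := by
  have hm0 : (0:ℝ) ≤ m := by linarith
  set P : ℝ := β * M ^ m + K with hPdef
  have hP0 : 0 < P := by positivity
  set C0 : ℝ := 8 * (P + K) + 1 with hC0def
  have hC00 : 0 < C0 := by positivity
  set R0 : ℝ := C0 / α + 4 with hR0def
  have hR00 : 0 < R0 := by positivity
  set Cn : ℝ := β * (n:ℝ) ^ m + K with hCndef
  have hCn0 : 0 < Cn := by positivity
  refine ⟨16 * (P + 2 * K) + (6 * K + 4 * Cn + 2 * (β * R0 ^ m) + 2) + 1, by positivity, ?_⟩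
  intro L hL t ht y hy
  -- basic bounds on mCost t 0 y
  obtain ⟨c₀, hc₀mem, hc₀le⟩ := McostSub.straight_mem hL ht 0 y
  have hyt : ‖t⁻¹ • (y - 0)‖ ≤ M := by
    rw [sub_zero, norm_smul, norm_inv, Real.norm_eq_abs, abs_of_pos ht]
    rw [inv_mul_le_iff₀ ht, mul_comm]
    exact hy
  have hc₀P : c₀ ≤ P * t := by
    have h1 : β * ‖t⁻¹ • (y - 0)‖ ^ m ≤ β * M ^ m :=
      mul_le_mul_of_nonneg_left
        (Real.rpow_le_rpow (norm_nonneg _) hyt hm0) hβ.le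
    calc c₀ ≤ t * (β * ‖t⁻¹ • (y - 0)‖ ^ m + K) := hc₀le
      _ ≤ t * (β * M ^ m + K) := by nlinarith
      _ = P * t := by ring
  have hbdd : BddBelow {c : ℝ | ∃ η η' : ℝ → EuclideanSpace ℝ (Fin n),
      AdmissibleOn n 0 t η η' ∧ η 0 = 0 ∧ η t = y ∧
      IntervalIntegrable (fun s => L (η s) s (η' s)) volume 0 t ∧
      c = ∫ s in (0:ℝ)..t, L (η s) s (η' s)} :=
    ⟨-K * t, fun c hc => McostSub.elem_lower_bound hα hL ht.le 0 y hc⟩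
  have hm_up : mCost n L t 0 y ≤ P * t := (csInf_le hbdd hc₀mem).trans hc₀P
  have hm_low : -K * t ≤ mCost n L t 0 y :=
    le_csInf ⟨c₀, hc₀mem⟩ (fun c hc => McostSub.elem_lower_bound hα hL ht.le 0 y hc)
  rcases le_or_gt t 8 with ht8 | ht8
  · -- small time: crude straight-line bound
    obtain ⟨c₁, hc₁mem, hc₁le⟩ := McostSub.straight_mem hL
      (by linarith : (0:ℝ) < 2 * t) 0 ((2:ℝ) • y)
    have h2y : ‖(2*t)⁻¹ • ((2:ℝ) • y - 0)‖ ≤ M := by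
      rw [sub_zero, smul_smul]
      have he : (2*t)⁻¹ * 2 = t⁻¹ := by
        field_simp
      rw [he]
      simpa [sub_zero] using hyt
    have hc₁P : c₁ ≤ 2 * t * P := by
      have h1 : β * ‖(2*t)⁻¹ • ((2:ℝ) • y - 0)‖ ^ m ≤ β * M ^ m :=
        mul_le_mul_of_nonneg_left
          (Real.rpow_le_rpow (norm_nonneg _) h2y hm0) hβ.le
      calc c₁ ≤ 2 * t * (β * ‖(2*t)⁻¹ • ((2:ℝ) • y - 0)‖ ^ m + K) := hc₁le
        _ ≤ 2 * t * (β * M ^ m + K) := by nlinarith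
        _ = 2 * t * P := by ring
    have hbdd2 : BddBelow {c : ℝ | ∃ η η' : ℝ → EuclideanSpace ℝ (Fin n),
        AdmissibleOn n 0 (2*t) η η' ∧ η 0 = 0 ∧ η (2*t) = (2:ℝ) • y ∧
        IntervalIntegrable (fun s => L (η s) s (η' s)) volume 0 (2*t) ∧
        c = ∫ s in (0:ℝ)..(2*t), L (η s) s (η' s)} :=
      ⟨-K * (2*t), fun c hc => McostSub.elem_lower_bound hα hL (by linarith) 0 ((2:ℝ) • y) hc⟩
    have hmain : mCost n L (2*t) 0 ((2:ℝ) • y) ≤ 2 * t * P := (csInf_le hbdd2 hc₁mem).trans hc₁P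
    have hrest : 0 ≤ β * R0 ^ m := mul_nonneg hβ.le (Real.rpow_nonneg hR00.le m)
    nlinarith [mul_nonneg (sub_nonneg.2 ht8) hP0.le, mul_nonneg (sub_nonneg.2 ht8) hK.le,
      hCn0.le, hrest]
  · -- large time
    have hT1 : ((⌊t⌋:ℤ):ℝ) ≤ t := Int.floor_le t
    have hT2 : t < ((⌊t⌋:ℤ):ℝ) + 1 := Int.lt_floor_add_one t
    obtain ⟨A, hAmem, hAlt⟩ := (csInf_lt_iff hbdd ⟨c₀, hc₀mem⟩).1
      (show sInf _ < mCost n L t 0 y + 1 from lt_add_one _)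
    obtain ⟨η, η', hadm, hη0, hηt, hfint, hAeq⟩ := hAmem
    set f : ℝ → ℝ := fun s => L (η s) s (η' s) with hfdef
    have hA_up : A ≤ P * t + 1 := by linarith
    have hgpos : ∀ s, 0 ≤ f s + K := fun s => by
      have h1 := hL.lower_bound (η s) s (η' s)
      have h2 : 0 ≤ α * ‖η' s‖ ^ m := mul_nonneg hα.le (Real.rpow_nonneg (norm_nonneg _) m)
      simp only [hfdef]
      linarith
    have hg_int : IntervalIntegrable (fun s => f s + K) volume 0 t :=
      hfint.add intervalIntegrable_const
    set N : ℕ := ⌊t/4⌋₊ with hNdef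
    have hN1 : (N:ℝ) ≤ t/4 := Nat.floor_le (by positivity)
    have hN2 : t/4 < (N:ℝ) + 1 := Nat.lt_floor_add_one _
    have hN0 : 0 < N := Nat.floor_pos.2 (by linarith)
    have hNt : 4 * (N:ℝ) ≤ t := by linarith
    have hNge : t/8 ≤ (N:ℝ) := by linarith
    have hsub48 : ∀ aa bb : ℝ, 0 ≤ aa → aa ≤ bb → bb ≤ t →
        IntervalIntegrable (fun s => f s + K) volume aa bb := by
      intro aa bb h1 h2 h3
      refine hg_int.mono_set ?_
      rw [Set.uIcc_of_le h2, Set.uIcc_of_le ht.le]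
      exact Set.Icc_subset_Icc h1 h3
    have hsubf : ∀ aa bb : ℝ, 0 ≤ aa → aa ≤ bb → bb ≤ t →
        IntervalIntegrable f volume aa bb := by
      intro aa bb h1 h2 h3
      refine hfint.mono_set ?_
      rw [Set.uIcc_of_le h2, Set.uIcc_of_le ht.le]
      exact Set.Icc_subset_Icc h1 h3
    have hsubd : ∀ aa bb : ℝ, 0 ≤ aa → aa ≤ bb → bb ≤ t →
        IntervalIntegrable η' volume aa bb := by
      intro aa bb h1 h2 h3
      refine hadm.1.mono_set ?_
      rw [Set.uIcc_of_le h2, Set.uIcc_of_le ht.le]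
      exact Set.Icc_subset_Icc h1 h3
    have h0t : (∫ s in (0:ℝ)..t, (f s + K)) = A + K * t := by
      rw [intervalIntegral.integral_add hfint intervalIntegrable_const,
        intervalIntegral.integral_const, sub_zero, smul_eq_mul, ← hAeq]
      ring
    have hDbound : ∃ i : ℕ, i < N ∧
        (∫ s in (4*(i:ℝ))..(4*(i:ℝ)+4), (f s + K)) ≤ (A + K*t)/N := by
      by_contra hcon
      push_neg at hcon
      have hsum := intervalIntegral.sum_integral_adjacent_intervals
        (a := fun k : ℕ => 4*(k:ℝ)) (μ := volume) (f := fun s => f s + K) (n := N)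
        (fun k hk => hsub48 _ _ (by positivity)
          (by push_cast; linarith)
          (by
            have hk1 : ((k:ℝ) + 1) ≤ (N:ℝ) := by exact_mod_cast hk
            push_cast
            linarith))
      simp only [Nat.cast_add, Nat.cast_one, Nat.cast_zero, mul_zero, mul_add, mul_one] at hsum
      have hlt : ∀ i ∈ Finset.range N,
          (A + K*t)/N < ∫ s in (4*(i:ℝ))..(4*(i:ℝ)+4), (f s + K) :=
        fun i hi => hcon i (Finset.mem_range.1 hi)
      have hsum_lt := Finset.sum_lt_sum_of_nonempty
        (Finset.nonempty_range_iff.2 hN0.ne') hlt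
      rw [Finset.sum_const, Finset.card_range, nsmul_eq_mul,
        mul_div_cancel₀ _ (Nat.cast_pos.2 hN0 : (0:ℝ) < (N:ℝ)).ne'] at hsum_lt
      rw [hsum] at hsum_lt
      have hsplit := intervalIntegral.integral_add_adjacent_intervals
        (hsub48 0 (4*(N:ℝ)) le_rfl (by positivity) hNt)
        (hsub48 (4*(N:ℝ)) t (by positivity) hNt le_rfl)
      have htail : 0 ≤ ∫ s in (4*(N:ℝ))..t, (f s + K) :=
        intervalIntegral.integral_nonneg hNt (fun u _ => hgpos u)
      rw [h0t] at hsplit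
      linarith
    obtain ⟨i, hiN, hi⟩ := hDbound
    set τ : ℝ := 4*(i:ℝ) with hτdef
    have hτ0 : 0 ≤ τ := by positivity
    have hτ4 : τ + 4 ≤ t := by
      have h1 : (i:ℝ) + 1 ≤ (N:ℝ) := by exact_mod_cast hiN
      have : τ + 4 = 4 * ((i:ℝ) + 1) := by ring
      linarith
    have hmid_le : (∫ s in τ..(τ+4), (f s + K)) ≤ C0 := by
      refine hi.trans ?_
      rw [div_le_iff₀ (Nat.cast_pos.2 hN0 : (0:ℝ) < (N:ℝ))]
      have h8 : (1:ℝ) ≤ t/8 := by linarith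
      have h10 : 0 ≤ C0 * ((N:ℝ) - t/8) := mul_nonneg hC00.le (sub_nonneg.2 hNge)
      rw [hC0def] at h10 ⊢
      nlinarith [h10, hA_up, h8]
    have hmid_f_low : -(4*K) ≤ ∫ s in τ..(τ+4), f s := by
      have := intervalIntegral.integral_mono_on (f := fun _ => -K) (μ := volume)
        (by linarith : τ ≤ τ + 4) intervalIntegrable_const
        (hsubf τ (τ+4) hτ0 (by linarith) hτ4)
        (fun x _ => by
          have h1 := hL.lower_bound (η x) x (η' x)
          have h2 : 0 ≤ α * ‖η' x‖ ^ m :=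
            mul_nonneg hα.le (Real.rpow_nonneg (norm_nonneg _) m)
          show -K ≤ f x
          simp only [hfdef]
          linarith)
      rw [intervalIntegral.integral_const, smul_eq_mul] at this
      have he : (τ + 4 - τ) = 4 := by ring
      rw [he] at this
      linarith
    -- speed and displacement bounds on the cheap interval
    have hgmid := hsub48 τ (τ+4) hτ0 (by linarith) hτ4
    have hnorm_int : IntervalIntegrable (fun s => ‖η' s‖) volume τ (τ+4) :=
      (hsubd τ (τ+4) hτ0 (by linarith) hτ4).norm
    have hptw : ∀ s ∈ Set.Icc τ (τ+4), ‖η' s‖ ≤ (f s + K) * α⁻¹ + 1 := by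
      intro s _
      have h1 := hL.lower_bound (η s) s (η' s)
      have h2 : α * ‖η' s‖^m ≤ f s + K := by
        simp only [hfdef]
        linarith
      have h3 : ‖η' s‖^m ≤ (f s + K) * α⁻¹ := by
        rw [← div_eq_mul_inv, le_div_iff₀ hα, mul_comm]
        exact h2
      have h4 : ‖η' s‖ ≤ ‖η' s‖^m + 1 := by
        rcases le_or_gt ‖η' s‖ 1 with h | h
        · have h5 : (0:ℝ) ≤ ‖η' s‖^m := Real.rpow_nonneg (norm_nonneg _) m
          linarith
        · have h5 : ‖η' s‖ ^ (1:ℝ) ≤ ‖η' s‖^m :=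
            Real.rpow_le_rpow_of_exponent_le h.le hm.le
          rw [Real.rpow_one] at h5
          linarith
      linarith
    have hint2 : IntervalIntegrable (fun s => (f s + K) * α⁻¹ + 1) volume τ (τ+4) :=
      (hgmid.mul_const _).add intervalIntegrable_const
    have hsp := intervalIntegral.integral_mono_on (by linarith : τ ≤ τ+4)
      hnorm_int hint2 hptw
    have hsp2 : (∫ s in τ..(τ+4), ((f s + K) * α⁻¹ + 1))
        = (∫ s in τ..(τ+4), (f s + K)) * α⁻¹ + 4 := by
      rw [intervalIntegral.integral_add (hgmid.mul_const _) intervalIntegrable_const,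
        intervalIntegral.integral_mul_const, intervalIntegral.integral_const, smul_eq_mul]
      ring
    have hspeed : (∫ s in τ..(τ+4), ‖η' s‖) ≤ R0 := by
      rw [hR0def, div_eq_mul_inv]
      have h6 : (∫ s in τ..(τ+4), (f s + K)) * α⁻¹ ≤ C0 * α⁻¹ :=
        mul_le_mul_of_nonneg_right hmid_le (inv_nonneg.2 hα.le)
      rw [hsp2] at hsp
      linarith
    have hdisp : η (τ+4) = η τ + ∫ u in τ..(τ+4), η' u := by
      have hadd : (∫ u in (0:ℝ)..τ, η' u) + ∫ u in τ..(τ+4), η' u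
          = ∫ u in (0:ℝ)..(τ+4), η' u :=
        intervalIntegral.integral_add_adjacent_intervals
          (hsubd 0 τ le_rfl hτ0 (by linarith))
          (hsubd τ (τ+4) hτ0 (by linarith) hτ4)
      rw [hadm.2 τ ⟨hτ0, by linarith⟩, add_assoc, hadd]
      exact hadm.2 (τ+4) ⟨by linarith, hτ4⟩
    have hDle : ‖η (τ+4) - η τ‖ ≤ R0 := by
      rw [hdisp, add_sub_cancel_left]
      exact (intervalIntegral.norm_integral_le_integral_norm
        (by linarith : τ ≤ τ+4)).trans hspeed
    -- lattice approximation of y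
    set w : Fin n → ℤ := fun i => round (y i) with hwdef
    set wR : EuclideanSpace ℝ (Fin n) := WithLp.toLp 2 (fun i => ((w i : ℤ) : ℝ)) with hwRdef
    have hwy : ‖y - wR‖ ≤ (n:ℝ) := by
      have h1 : ‖y - wR‖ ≤ Real.sqrt n := by
        rw [EuclideanSpace.norm_eq]
        refine Real.sqrt_le_sqrt ?_
        have hstep : ∀ i : Fin n, ‖(y - wR) i‖ ^ 2 ≤ (1:ℝ) := by
          intro i
          have h3 : (y - wR) i = y i - ((w i : ℤ) : ℝ) := rfl
          have h4 : ‖(y - wR) i‖ ≤ 1 := by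
            rw [h3, Real.norm_eq_abs]
            have h5 := abs_sub_round (y i)
            simp only [hwdef]
            linarith
          nlinarith [norm_nonneg ((y - wR) i)]
        calc (∑ i, ‖(y - wR) i‖ ^ 2) ≤ ∑ _i : Fin n, (1:ℝ) :=
              Finset.sum_le_sum fun i _ => hstep i
          _ = (n:ℝ) := by simp
      refine h1.trans ?_
      have h2 : (1:ℝ) ≤ (n:ℝ) := by exact_mod_cast hn
      nlinarith [Real.sq_sqrt (by positivity : (0:ℝ) ≤ (n:ℝ)), Real.sqrt_nonneg (n:ℝ),
        sq_nonneg (Real.sqrt (n:ℝ) - 1)]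
    -- integer time shifts
    set T : ℤ := ⌊t⌋ with hTdef
    set j₁ : ℤ := T + 2 with hj₁def
    set j₂ : ℤ := T - 1 with hj₂def
    have hj₁R : ((j₁:ℤ):ℝ) = ((T:ℤ):ℝ) + 2 := by rw [hj₁def]; push_cast; ring
    have hj₂R : ((j₂:ℤ):ℝ) = ((T:ℤ):ℝ) - 1 := by rw [hj₂def]; push_cast; ring
    -- the two translated pieces of η
    obtain ⟨hadm₃, hint₃, hval₃⟩ := McostSub.shift_pieces le_rfl hτ0 (by linarith : τ ≤ t)
      hadm hL.periodic hfint w j₁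
    obtain ⟨hadm₅, hint₅, hval₅⟩ := McostSub.shift_pieces (by linarith : (0:ℝ) ≤ τ+4)
      (by linarith : τ+4 ≤ t) le_rfl hadm hL.periodic hfint w j₂
    -- schedule
    have hb12 : t < 0 + (j₁:ℝ) := by rw [hj₁R]; linarith
    have hb12' : 0 + (j₁:ℝ) - t ≤ 2 := by rw [hj₁R]; linarith
    have hb20 : (0:ℝ) ≤ 0 + (j₁:ℝ) := by linarith
    have hb23 : 0 + (j₁:ℝ) ≤ τ + (j₁:ℝ) := by linarith
    have hb34 : τ + (j₁:ℝ) + 1 = (τ+4) + (j₂:ℝ) := by rw [hj₁R, hj₂R]; ring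
    have hb34' : τ + (j₁:ℝ) < (τ+4) + (j₂:ℝ) := by linarith
    have hb45 : (τ+4) + (j₂:ℝ) ≤ t + (j₂:ℝ) := by linarith
    have hb56 : t + (j₂:ℝ) < 2*t := by rw [hj₂R]; linarith
    have hb56' : 2*t - (t + (j₂:ℝ)) ≤ 2 := by rw [hj₂R]; linarith
    have hb56'' : (1:ℝ) ≤ 2*t - (t + (j₂:ℝ)) := by rw [hj₂R]; linarith
    have hb12'' : (1:ℝ) ≤ 0 + (j₁:ℝ) - t := by rw [hj₁R]; linarith
    -- junction points
    set p₃ : EuclideanSpace ℝ (Fin n) := WithLp.toLp 2 (fun i => η τ i + ((w i : ℤ) : ℝ)) with hp₃def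
    set p₄ : EuclideanSpace ℝ (Fin n) := WithLp.toLp 2 (fun i => η (τ+4) i + ((w i : ℤ) : ℝ)) with hp₄def
    set p₅ : EuclideanSpace ℝ (Fin n) := WithLp.toLp 2 (fun i => y i + ((w i : ℤ) : ℝ)) with hp₅def
    have h0b3 : (0:ℝ) ≤ τ + (j₁:ℝ) := by linarith
    have h0b4 : (0:ℝ) ≤ (τ+4) + (j₂:ℝ) := by rw [hj₂R]; linarith
    have h0b5 : (0:ℝ) ≤ t + (j₂:ℝ) := by rw [hj₂R]; linarith
    -- raw (unfolded) copies
    have hfint2 : IntervalIntegrable (fun s => L (η s) s (η' s)) volume 0 t := hfint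
    have hAeq2 : A = ∫ s in (0:ℝ)..t, L (η s) s (η' s) := hAeq
    have hsubf2 : ∀ aa bb : ℝ, 0 ≤ aa → aa ≤ bb → bb ≤ t →
        IntervalIntegrable (fun u => L (η u) u (η' u)) volume aa bb :=
      fun aa bb h1 h2 h3 => hsubf aa bb h1 h2 h3
    have hmid_raw : -(4*K) ≤ ∫ s in τ..(τ+4), L (η s) s (η' s) := hmid_f_low
    -- the six pieces
    have hline₂ := McostSub.line_adm hb12 y wR
    have hcost₂ := McostSub.line_cost hb12 y wR hL
    have hline₄ := McostSub.line_adm hb34' p₃ p₄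
    have hcost₄ := McostSub.line_cost hb34' p₃ p₄ hL
    have hline₆ := McostSub.line_adm hb56 p₅ ((2:ℝ) • y)
    have hcost₆ := McostSub.line_cost hb56 p₅ ((2:ℝ) • y) hL
    -- junction matching
    have m1 : McostSub.lineSeg t (0 + (j₁:ℝ)) y wR t = η t :=
      (McostSub.lineSeg_left hb12 y wR).trans hηt.symm
    have hZ1b2 : McostSub.glue t η (McostSub.lineSeg t (0 + (j₁:ℝ)) y wR) (0 + (j₁:ℝ)) = wR :=
      (McostSub.glue_right' _ _ hb12.le m1.symm).trans (McostSub.lineSeg_right hb12 y wR)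
    have m2 : (fun s => (WithLp.toLp 2 (fun i => η (s - (j₁:ℝ)) i + ((w i : ℤ):ℝ)) :
          EuclideanSpace ℝ (Fin n))) (0 + (j₁:ℝ))
        = McostSub.glue t η (McostSub.lineSeg t (0 + (j₁:ℝ)) y wR) (0 + (j₁:ℝ)) := by
      rw [hZ1b2]
      ext i2
      have he : (0:ℝ) + (j₁:ℝ) - (j₁:ℝ) = 0 := by ring
      show η ((0:ℝ) + (j₁:ℝ) - (j₁:ℝ)) i2 + ((w i2 : ℤ):ℝ) = wR i2
      rw [he, hη0, hwRdef]
      simp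
    have hG1 := McostSub.glue_adm ht.le hb12.le hadm hline₂ m1
    have hG2 := McostSub.glue_adm hb20 hb23 hG1 hadm₃ m2
    have hZ2b3 : McostSub.glue (0 + (j₁:ℝ)) (McostSub.glue t η
        (McostSub.lineSeg t (0 + (j₁:ℝ)) y wR))
        (fun s => (WithLp.toLp 2 (fun i => η (s - (j₁:ℝ)) i + ((w i : ℤ):ℝ)) : EuclideanSpace ℝ (Fin n)))
        (τ + (j₁:ℝ)) = p₃ := by
      rw [McostSub.glue_right' _ _ hb23 m2.symm]
      ext i2
      have he : τ + (j₁:ℝ) - (j₁:ℝ) = τ := by ring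
      show η (τ + (j₁:ℝ) - (j₁:ℝ)) i2 + ((w i2 : ℤ):ℝ) = p₃ i2
      rw [he, hp₃def]
    have m3 : McostSub.lineSeg (τ + (j₁:ℝ)) ((τ+4) + (j₂:ℝ)) p₃ p₄ (τ + (j₁:ℝ))
        = McostSub.glue (0 + (j₁:ℝ)) (McostSub.glue t η
          (McostSub.lineSeg t (0 + (j₁:ℝ)) y wR))
          (fun s => (WithLp.toLp 2 (fun i => η (s - (j₁:ℝ)) i + ((w i : ℤ):ℝ)) : EuclideanSpace ℝ (Fin n)))
          (τ + (j₁:ℝ)) :=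
      (McostSub.lineSeg_left hb34' p₃ p₄).trans hZ2b3.symm
    have hG3 := McostSub.glue_adm h0b3 hb34'.le hG2 hline₄ m3
    have hZ3b4 : McostSub.glue (τ + (j₁:ℝ)) (McostSub.glue (0 + (j₁:ℝ)) (McostSub.glue t η
        (McostSub.lineSeg t (0 + (j₁:ℝ)) y wR))
        (fun s => (WithLp.toLp 2 (fun i => η (s - (j₁:ℝ)) i + ((w i : ℤ):ℝ)) : EuclideanSpace ℝ (Fin n))))
        (McostSub.lineSeg (τ + (j₁:ℝ)) ((τ+4) + (j₂:ℝ)) p₃ p₄) ((τ+4) + (j₂:ℝ)) = p₄ := by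
      rw [McostSub.glue_right' _ _ hb34'.le m3.symm]
      exact McostSub.lineSeg_right hb34' p₃ p₄
    have m4 : (fun s => (WithLp.toLp 2 (fun i => η (s - (j₂:ℝ)) i + ((w i : ℤ):ℝ)) :
          EuclideanSpace ℝ (Fin n))) ((τ+4) + (j₂:ℝ))
        = McostSub.glue (τ + (j₁:ℝ)) (McostSub.glue (0 + (j₁:ℝ)) (McostSub.glue t η
          (McostSub.lineSeg t (0 + (j₁:ℝ)) y wR))
          (fun s => (WithLp.toLp 2 (fun i => η (s - (j₁:ℝ)) i + ((w i : ℤ):ℝ)) : EuclideanSpace ℝ (Fin n))))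
          (McostSub.lineSeg (τ + (j₁:ℝ)) ((τ+4) + (j₂:ℝ)) p₃ p₄) ((τ+4) + (j₂:ℝ)) := by
      rw [hZ3b4]
      ext i2
      have he : (τ+4) + (j₂:ℝ) - (j₂:ℝ) = τ + 4 := by ring
      show η ((τ+4) + (j₂:ℝ) - (j₂:ℝ)) i2 + ((w i2 : ℤ):ℝ) = p₄ i2
      rw [he, hp₄def]
    have hG4 := McostSub.glue_adm h0b4 hb45 hG3 hadm₅ m4
    have hZ4b5 : McostSub.glue ((τ+4) + (j₂:ℝ)) (McostSub.glue (τ + (j₁:ℝ))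
        (McostSub.glue (0 + (j₁:ℝ)) (McostSub.glue t η
          (McostSub.lineSeg t (0 + (j₁:ℝ)) y wR))
          (fun s => (WithLp.toLp 2 (fun i => η (s - (j₁:ℝ)) i + ((w i : ℤ):ℝ)) : EuclideanSpace ℝ (Fin n))))
          (McostSub.lineSeg (τ + (j₁:ℝ)) ((τ+4) + (j₂:ℝ)) p₃ p₄))
        (fun s => (WithLp.toLp 2 (fun i => η (s - (j₂:ℝ)) i + ((w i : ℤ):ℝ)) : EuclideanSpace ℝ (Fin n)))
        (t + (j₂:ℝ)) = p₅ := by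
      rw [McostSub.glue_right' _ _ hb45 m4.symm]
      ext i2
      have he : t + (j₂:ℝ) - (j₂:ℝ) = t := by ring
      show η (t + (j₂:ℝ) - (j₂:ℝ)) i2 + ((w i2 : ℤ):ℝ) = p₅ i2
      rw [he, hηt, hp₅def]
    have m5 : McostSub.lineSeg (t + (j₂:ℝ)) (2*t) p₅ ((2:ℝ) • y) (t + (j₂:ℝ))
        = McostSub.glue ((τ+4) + (j₂:ℝ)) (McostSub.glue (τ + (j₁:ℝ))
          (McostSub.glue (0 + (j₁:ℝ)) (McostSub.glue t η
            (McostSub.lineSeg t (0 + (j₁:ℝ)) y wR))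
            (fun s => (WithLp.toLp 2 (fun i => η (s - (j₁:ℝ)) i + ((w i : ℤ):ℝ)) : EuclideanSpace ℝ (Fin n))))
            (McostSub.lineSeg (τ + (j₁:ℝ)) ((τ+4) + (j₂:ℝ)) p₃ p₄))
          (fun s => (WithLp.toLp 2 (fun i => η (s - (j₂:ℝ)) i + ((w i : ℤ):ℝ)) : EuclideanSpace ℝ (Fin n)))
          (t + (j₂:ℝ)) :=
      (McostSub.lineSeg_left hb56 p₅ ((2:ℝ) • y)).trans hZ4b5.symm
    have hG5 := McostSub.glue_adm h0b5 hb56.le hG4 hline₆ m5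
    -- costs
    have hC1 := McostSub.glue_cost (L := L) ht.le hb12.le hfint2 hcost₂.1
    have hC2 := McostSub.glue_cost (L := L) hb20 hb23 hC1.1 hint₃
    have hC3 := McostSub.glue_cost (L := L) h0b3 hb34'.le hC2.1 hcost₄.1
    have hC4 := McostSub.glue_cost (L := L) h0b4 hb45 hC3.1 hint₅
    have hC5 := McostSub.glue_cost (L := L) h0b5 hb56.le hC4.1 hcost₆.1
    -- membership and final estimate
    have hbdd2 : BddBelow {c : ℝ | ∃ ηq ηq' : ℝ → EuclideanSpace ℝ (Fin n),
        AdmissibleOn n 0 (2*t) ηq ηq' ∧ ηq 0 = 0 ∧ ηq (2*t) = (2:ℝ) • y ∧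
        IntervalIntegrable (fun s => L (ηq s) s (ηq' s)) volume 0 (2*t) ∧
        c = ∫ s in (0:ℝ)..(2*t), L (ηq s) s (ηq' s)} :=
      ⟨-K * (2*t), fun c hc => McostSub.elem_lower_bound hα hL (by linarith) 0 ((2:ℝ) • y) hc⟩
    refine le_trans (csInf_le hbdd2 ⟨_, _, hG5, ?_, ?_, hC5.1, rfl⟩) ?_
    · rw [McostSub.glue_left _ _ h0b5, McostSub.glue_left _ _ h0b4,
        McostSub.glue_left _ _ h0b3, McostSub.glue_left _ _ hb20,
        McostSub.glue_left _ _ ht.le]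
      exact hη0
    · rw [McostSub.glue_right _ _ hb56]
      exact McostSub.lineSeg_right hb56 p₅ ((2:ℝ) • y)
    · rw [hC5.2, hC4.2, hC3.2, hC2.2, hC1.2, hval₃, hval₅]
      -- bound the three connector costs
      have hq₂ : ‖wR - y‖ ≤ (n:ℝ) := by rw [norm_sub_rev]; exact hwy
      have hc₂le := McostSub.line_cost_le hb12 hb12'' hb12' hq₂ hβ hK hm0 hL
      have hpq : p₄ - p₃ = η (τ+4) - η τ := by
        ext i2
        simp only [hp₃def, hp₄def, PiLp.sub_apply, PiLp.toLp_apply]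
        ring
      have hq₄ : ‖p₄ - p₃‖ ≤ R0 := by rw [hpq]; exact hDle
      have hc₄le := McostSub.line_cost_le hb34' (by linarith) (by linarith) hq₄ hβ hK hm0 hL
      have hq₆' : (2:ℝ) • y - p₅ = y - wR := by
        ext i2
        simp only [hp₅def, hwRdef, PiLp.sub_apply, PiLp.smul_apply, smul_eq_mul, PiLp.toLp_apply]
        ring
      have hq₆ : ‖(2:ℝ) • y - p₅‖ ≤ (n:ℝ) := by rw [hq₆']; exact hwy
      have hc₆le := McostSub.line_cost_le hb56 hb56'' hb56' hq₆ hβ hK hm0 hL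
      -- the two retained pieces of the optimal curve
      have hs1 : (∫ u in (0:ℝ)..τ, L (η u) u (η' u)) + (∫ u in τ..(τ+4), L (η u) u (η' u))
          = ∫ u in (0:ℝ)..(τ+4), L (η u) u (η' u) :=
        intervalIntegral.integral_add_adjacent_intervals
          (hsubf2 0 τ le_rfl hτ0 (by linarith)) (hsubf2 τ (τ+4) hτ0 (by linarith) hτ4)
      have hs2 : (∫ u in (0:ℝ)..(τ+4), L (η u) u (η' u)) + (∫ u in (τ+4)..t, L (η u) u (η' u))
          = ∫ u in (0:ℝ)..t, L (η u) u (η' u) :=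
        intervalIntegral.integral_add_adjacent_intervals
          (hsubf2 0 (τ+4) le_rfl (by linarith) hτ4) (hsubf2 (τ+4) t (by linarith) hτ4 le_rfl)
      have hrest : 0 ≤ β * R0 ^ m := mul_nonneg hβ.le (Real.rpow_nonneg hR00.le m)
      linarith [hc₂le, hc₄le, hc₆le, hs1, hs2, hmid_raw, hAlt, hAeq2, hP0, hCn0]

end
end

section
/- For every M > 0 there exists a constant C > 0, depending only on K, M, n, α, β and m, such that for all t > 0 and all y ∈ ℝⁿ with |y| ≤ Mt, one has limsup_{k→∞} 2^{−k} m(2^k t, 0, 2^k y) ≤ m(t, 0, y) + C. -/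
open MeasureTheory Filter

noncomputable section

namespace McostAux
variable {n : ℕ} {α β K m : ℝ}
  {L : EuclideanSpace ℝ (Fin n) → ℝ → EuclideanSpace ℝ (Fin n) → ℝ}

def intVec {n : ℕ} (wI : Fin n → ℤ) : EuclideanSpace ℝ (Fin n) := WithLp.toLp 2 (fun i => (wI i : ℝ))

structure Good (L : EuclideanSpace ℝ (Fin n) → ℝ → EuclideanSpace ℝ (Fin n) → ℝ)
    (a b : ℝ) (ξ ξ' : ℝ → EuclideanSpace ℝ (Fin n)) : Prop where
  hab : a ≤ b
  intD : IntervalIntegrable ξ' volume a b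
  intC : IntervalIntegrable (fun s => L (ξ s) s (ξ' s)) volume a b
  formula : ∀ s ∈ Set.Icc a b, ξ s = ξ a + ∫ u in a..s, ξ' u

/-- congruence on the open interval suffices for interval integrability -/
lemma II_congr_Ioo {F : Type*} [NormedAddCommGroup F] {f g : ℝ → F} {a b : ℝ} (hab : a ≤ b)
    (h : ∀ s ∈ Set.Ioo a b, f s = g s) (hg : IntervalIntegrable g volume a b) :
    IntervalIntegrable f volume a b := by
  rw [intervalIntegrable_iff_integrableOn_Ioo_of_le hab] at hg ⊢
  exact hg.congr_fun (fun x hx => (h x hx).symm) measurableSet_Ioo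

lemma intInt_congr_Ioo {F : Type*} [NormedAddCommGroup F] [NormedSpace ℝ F]
    {f g : ℝ → F} {a b : ℝ} (hab : a ≤ b) (h : ∀ s ∈ Set.Ioo a b, f s = g s) :
    ∫ u in a..b, f u = ∫ u in a..b, g u := by
  rw [intervalIntegral.integral_of_le hab, intervalIntegral.integral_of_le hab,
    MeasureTheory.integral_Ioc_eq_integral_Ioo]
  rw [MeasureTheory.integral_Ioc_eq_integral_Ioo]
  exact MeasureTheory.setIntegral_congr_fun measurableSet_Ioo h

theorem Good.glue {a b c : ℝ} {ξ ξ' ζ ζ' : ℝ → EuclideanSpace ℝ (Fin n)}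
    (h1 : Good L a b ξ ξ') (h2 : Good L b c ζ ζ') (hm : ξ b = ζ b) :
    Good L a c (fun s => if s < b then ξ s else ζ s) (fun s => if s < b then ξ' s else ζ' s) := by
  have hD1 : IntervalIntegrable (fun s => if s < b then ξ' s else ζ' s) volume a b :=
    II_congr_Ioo h1.hab (fun s hs => if_pos hs.2) h1.intD
  have hD2 : IntervalIntegrable (fun s => if s < b then ξ' s else ζ' s) volume b c :=
    II_congr_Ioo h2.hab (fun s hs => if_neg (not_lt.mpr hs.1.le)) h2.intD
  refine ⟨h1.hab.trans h2.hab, hD1.trans hD2, ?_, ?_⟩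
  · refine (II_congr_Ioo h1.hab (fun s hs => ?_) h1.intC).trans
      (II_congr_Ioo h2.hab (fun s hs => ?_) h2.intC)
    · simp only [if_pos hs.2]
    · simp only [if_neg (not_lt.mpr hs.1.le)]
  · intro s hs
    have hΞa : (if a < b then ξ a else ζ a) = ξ a := by
      by_cases hab : a < b
      · rw [if_pos hab]
      · rw [if_neg hab]
        have : a = b := le_antisymm h1.hab (not_lt.mp hab)
        rw [this, ← hm]
    by_cases hsb : s ≤ b
    · have hΞs : (if s < b then ξ s else ζ s) = ξ s := by
        by_cases h' : s < b
        · rw [if_pos h']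
        · rw [if_neg h']
          have : s = b := le_antisymm hsb (not_lt.mp h')
          rw [this, ← hm]
      simp only [hΞa, hΞs]
      have : ∫ u in a..s, (if u < b then ξ' u else ζ' u) = ∫ u in a..s, ξ' u :=
        intInt_congr_Ioo hs.1 (fun u hu => if_pos (lt_of_lt_of_le hu.2 hsb))
      rw [this]
      exact h1.formula s ⟨hs.1, hsb⟩
    · push_neg at hsb
      have hsc : s ∈ Set.Icc b c := ⟨hsb.le, hs.2⟩
      have hI2 : IntervalIntegrable (fun u => if u < b then ξ' u else ζ' u) volume b s :=
        hD2.mono_set (Set.uIcc_subset_uIcc Set.left_mem_uIcc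
          (Set.mem_uIcc.mpr (Or.inl ⟨hsc.1, hsc.2⟩)))
      have hsplit : ∫ u in a..s, (if u < b then ξ' u else ζ' u)
          = (∫ u in a..b, (if u < b then ξ' u else ζ' u))
            + ∫ u in b..s, (if u < b then ξ' u else ζ' u) :=
        (intervalIntegral.integral_add_adjacent_intervals hD1 hI2).symm
      have e1 : ∫ u in a..b, (if u < b then ξ' u else ζ' u) = ∫ u in a..b, ξ' u :=
        intInt_congr_Ioo h1.hab (fun u hu => if_pos hu.2)
      have e2 : ∫ u in b..s, (if u < b then ξ' u else ζ' u) = ∫ u in b..s, ζ' u :=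
        intInt_congr_Ioo hsb.le (fun u hu => if_neg (not_lt.mpr hu.1.le))
      have f1 : ξ b = ξ a + ∫ u in a..b, ξ' u := h1.formula b ⟨h1.hab, le_refl _⟩
      have f2 : ζ s = ζ b + ∫ u in b..s, ζ' u := h2.formula s hsc
      simp only [if_neg (not_lt.mpr hsb.le), hΞa, hsplit, e1, e2]
      rw [f2, ← hm, f1]
      abel

theorem glue_cost {a b c : ℝ} {ξ ξ' ζ ζ' : ℝ → EuclideanSpace ℝ (Fin n)}
    (h1 : Good L a b ξ ξ') (h2 : Good L b c ζ ζ') :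
    ∫ s in a..c, L ((fun s => if s < b then ξ s else ζ s) s) s
        ((fun s => if s < b then ξ' s else ζ' s) s)
      = (∫ s in a..b, L (ξ s) s (ξ' s)) + ∫ s in b..c, L (ζ s) s (ζ' s) := by
  have i1 : IntervalIntegrable (fun s => L ((if s < b then ξ s else ζ s)) s
      ((if s < b then ξ' s else ζ' s))) volume a b :=
    II_congr_Ioo h1.hab (fun s hs => by simp only [if_pos hs.2]) h1.intC
  have i2 : IntervalIntegrable (fun s => L ((if s < b then ξ s else ζ s)) s
      ((if s < b then ξ' s else ζ' s))) volume b c :=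
    II_congr_Ioo h2.hab (fun s hs => by simp only [if_neg (not_lt.mpr hs.1.le)]) h2.intC
  rw [← intervalIntegral.integral_add_adjacent_intervals i1 i2]
  congr 1
  · exact intInt_congr_Ioo h1.hab (fun s hs => by simp only [if_pos hs.2])
  · exact intInt_congr_Ioo h2.hab (fun s hs => by simp only [if_neg (not_lt.mpr hs.1.le)])


-- the line pair
def linePath (a b : ℝ) (P v : EuclideanSpace ℝ (Fin n)) : ℝ → EuclideanSpace ℝ (Fin n) :=
  fun s => P + ((s - a)/(b - a)) • v

lemma linePath_continuous (a b : ℝ) (P v : EuclideanSpace ℝ (Fin n)) :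
    Continuous (linePath a b P v) := by
  unfold linePath
  exact continuous_const.add (((continuous_id.sub continuous_const).div_const _).smul
    continuous_const)

lemma linePath_a (a b : ℝ) (P v : EuclideanSpace ℝ (Fin n)) : linePath a b P v a = P := by
  simp [linePath]

lemma linePath_b {a b : ℝ} (hab : a ≠ b) (P v : EuclideanSpace ℝ (Fin n)) :
    linePath a b P v b = P + v := by
  simp [linePath, div_self (sub_ne_zero.mpr (Ne.symm hab))]

theorem Good.line (hL : IsLagrangian n α β K m L) {a b : ℝ} (hab : a ≤ b)
    (P v : EuclideanSpace ℝ (Fin n)) :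
    Good L a b (linePath a b P v) (fun _ => (b - a)⁻¹ • v) := by
  refine ⟨hab, intervalIntegrable_const, ?_, ?_⟩
  · apply Continuous.intervalIntegrable
    exact hL.cont.comp ((linePath_continuous a b P v).prodMk
      (continuous_id.prodMk continuous_const))
  · intro s hs
    rw [intervalIntegral.integral_const, linePath_a]
    unfold linePath
    rw [smul_smul, div_eq_mul_inv]

theorem line_cost_le (hL : IsLagrangian n α β K m L) (hβ : 0 ≤ β) (hm0 : 0 ≤ m)
    {a b D : ℝ} (hab : a ≤ b)
    (P v : EuclideanSpace ℝ (Fin n)) (hD : ‖(b - a)⁻¹ • v‖ ≤ D) (hD0 : 0 ≤ D) :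
    ∫ s in a..b, L (linePath a b P v s) s ((b - a)⁻¹ • v) ≤ (b - a) * (β * D ^ m + K) := by
  have hint : IntervalIntegrable (fun s => L (linePath a b P v s) s ((b - a)⁻¹ • v))
      volume a b := (Good.line hL hab P v).intC
  calc ∫ s in a..b, L (linePath a b P v s) s ((b - a)⁻¹ • v)
      ≤ ∫ _ in a..b, (β * D ^ m + K) := by
        apply intervalIntegral.integral_mono_on hab hint intervalIntegrable_const
        intro x _
        refine (hL.upper_bound _ _ _).trans ?_
        have : ‖(b - a)⁻¹ • v‖ ^ m ≤ D ^ m := Real.rpow_le_rpow (norm_nonneg _) hD hm0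
        nlinarith [this]
    _ = (b - a) * (β * D ^ m + K) := by rw [intervalIntegral.integral_const]; simp [smul_eq_mul]

-- the shifted copy
theorem Good.copy (hL : IsLagrangian n α β K m L) {T : ℝ}
    {η η' : ℝ → EuclideanSpace ℝ (Fin n)}
    (hη : AdmissibleOn n 0 T η η')
    (hg : IntervalIntegrable (fun s => L (η s) s (η' s)) volume 0 T)
    (j : ℤ) (wI : Fin n → ℤ) {c d : ℝ} (hc : 0 ≤ c) (hcd : c ≤ d) (hdT : d ≤ T) :
    Good L (c + (j:ℝ)) (d + (j:ℝ))
      (fun s => η (s - (j:ℝ)) + intVec wI)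
      (fun s => η' (s - (j:ℝ))) := by
  have hsub : Set.uIcc c d ⊆ Set.uIcc 0 T :=
    Set.uIcc_subset_uIcc (Set.mem_uIcc.mpr (Or.inl ⟨hc, hcd.trans hdT⟩))
      (Set.mem_uIcc.mpr (Or.inl ⟨hc.trans hcd, hdT⟩))
  have keyEq : ∀ s : ℝ,
      L (η (s - (j:ℝ)) + intVec wI) s (η' (s - (j:ℝ)))
        = L (η (s - (j:ℝ))) (s - (j:ℝ)) (η' (s - (j:ℝ))) := by
    intro s
    have hper := hL.periodic (η (s - (j:ℝ))) (η' (s - (j:ℝ))) (s - (j:ℝ)) wI j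
    have hs : (s - (j:ℝ)) + (j:ℝ) = s := sub_add_cancel ..
    rw [hs] at hper
    have hW : (WithLp.toLp 2 (fun i => η (s - (j:ℝ)) i + (wI i : ℝ)))
        = η (s - (j:ℝ)) + intVec wI := rfl
    rw [hW] at hper
    exact hper
  refine ⟨by linarith, (hη.1.mono_set hsub).comp_sub_right (j:ℝ), ?_, ?_⟩
  · have : (fun s => L ((η (s - (j:ℝ)) + intVec wI)) s
        (η' (s - (j:ℝ)))) = fun s => L (η (s - (j:ℝ))) (s - (j:ℝ)) (η' (s - (j:ℝ))) :=
      funext keyEq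
    rw [this]
    exact (hg.mono_set hsub).comp_sub_right (j:ℝ)
  · intro s hs
    have hs1 : c ≤ s - (j:ℝ) := by have := hs.1; linarith
    have hs2 : s - (j:ℝ) ≤ d := by have := hs.2; linarith
    have e1 : ∫ u in (c + (j:ℝ))..s, η' (u - (j:ℝ)) = ∫ u in c..(s - (j:ℝ)), η' u := by
      rw [intervalIntegral.integral_comp_sub_right η' (j:ℝ), add_sub_cancel_right]
    have i0s : IntervalIntegrable η' volume 0 (s - (j:ℝ)) :=
      hη.1.mono_set (Set.uIcc_subset_uIcc Set.left_mem_uIcc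
        (Set.mem_uIcc.mpr (Or.inl ⟨hc.trans hs1, hs2.trans hdT⟩)))
    have i0c : IntervalIntegrable η' volume 0 c :=
      hη.1.mono_set (Set.uIcc_subset_uIcc Set.left_mem_uIcc
        (Set.mem_uIcc.mpr (Or.inl ⟨hc, hcd.trans hdT⟩)))
    have e2 : ∫ u in c..(s - (j:ℝ)), η' u
        = (∫ u in (0:ℝ)..(s - (j:ℝ)), η' u) - ∫ u in (0:ℝ)..c, η' u :=
      (intervalIntegral.integral_interval_sub_left i0s i0c).symm
    have f1 : η (s - (j:ℝ)) = η 0 + ∫ u in (0:ℝ)..(s - (j:ℝ)), η' u :=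
      hη.2 _ ⟨hc.trans hs1, hs2.trans hdT⟩
    have f2 : η c = η 0 + ∫ u in (0:ℝ)..c, η' u := hη.2 _ ⟨hc, hcd.trans hdT⟩
    have hcc : c + (j:ℝ) - (j:ℝ) = c := add_sub_cancel_right ..
    rw [e1, e2, hcc, f1, f2]
    abel

theorem copy_cost (hL : IsLagrangian n α β K m L)
    {η η' : ℝ → EuclideanSpace ℝ (Fin n)}
    (j : ℤ) (wI : Fin n → ℤ) (c d : ℝ) :
    ∫ s in (c + (j:ℝ))..(d + (j:ℝ)),
        L ((fun s => η (s - (j:ℝ)) + intVec wI) s) s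
          ((fun s => η' (s - (j:ℝ))) s)
      = ∫ s in c..d, L (η s) s (η' s) := by
  have keyEq : ∀ s : ℝ,
      L (η (s - (j:ℝ)) + intVec wI) s (η' (s - (j:ℝ)))
        = L (η (s - (j:ℝ))) (s - (j:ℝ)) (η' (s - (j:ℝ))) := by
    intro s
    have hper := hL.periodic (η (s - (j:ℝ))) (η' (s - (j:ℝ))) (s - (j:ℝ)) wI j
    have hs : (s - (j:ℝ)) + (j:ℝ) = s := sub_add_cancel ..
    rw [hs] at hper
    exact hper
  simp only [keyEq]
  rw [intervalIntegral.integral_comp_sub_right (fun u => L (η u) u (η' u)) (j:ℝ)]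
  congr 1 <;> ring


def costSet (n : ℕ) (L : EuclideanSpace ℝ (Fin n) → ℝ → EuclideanSpace ℝ (Fin n) → ℝ)
    (t : ℝ) (x y : EuclideanSpace ℝ (Fin n)) : Set ℝ :=
  {c : ℝ | ∃ η η' : ℝ → EuclideanSpace ℝ (Fin n),
    AdmissibleOn n 0 t η η' ∧ η 0 = x ∧ η t = y ∧
    IntervalIntegrable (fun s => L (η s) s (η' s)) volume 0 t ∧
    c = ∫ s in (0:ℝ)..t, L (η s) s (η' s)}

lemma mCost_def (t : ℝ) (x y : EuclideanSpace ℝ (Fin n)) :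
    mCost n L t x y = sInf (costSet n L t x y) := rfl

lemma cost_lb (hL : IsLagrangian n α β K m L) (hα : 0 < α)
    (x : EuclideanSpace ℝ (Fin n)) (t : ℝ) (v : EuclideanSpace ℝ (Fin n)) :
    -K ≤ L x t v := by
  have h := hL.lower_bound x t v
  have h2 : (0:ℝ) ≤ ‖v‖ ^ m := Real.rpow_nonneg (norm_nonneg v) m
  nlinarith

lemma Good.mem_costSet {t : ℝ} {ξ ξ' : ℝ → EuclideanSpace ℝ (Fin n)}
    (h : Good L 0 t ξ ξ') {x y : EuclideanSpace ℝ (Fin n)} (h0 : ξ 0 = x) (ht : ξ t = y) :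
    (∫ s in (0:ℝ)..t, L (ξ s) s (ξ' s)) ∈ costSet n L t x y :=
  ⟨ξ, ξ', ⟨h.intD, h.formula⟩, h0, ht, h.intC, rfl⟩

lemma costSet_lower (hL : IsLagrangian n α β K m L) (hα : 0 < α) {t : ℝ} (ht : 0 ≤ t)
    {x y : EuclideanSpace ℝ (Fin n)} {c : ℝ} (hc : c ∈ costSet n L t x y) :
    -K * t ≤ c := by
  obtain ⟨η, η', hadm, h0, hty, hint, rfl⟩ := hc
  have : ∫ s in (0:ℝ)..t, (-K) ≤ ∫ s in (0:ℝ)..t, L (η s) s (η' s) :=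
    intervalIntegral.integral_mono_on ht intervalIntegrable_const hint
      (fun s _ => cost_lb hL hα _ _ _)
  simpa [mul_comm] using this

lemma costSet_bddBelow (hL : IsLagrangian n α β K m L) (hα : 0 < α) {t : ℝ} (ht : 0 ≤ t)
    (x y : EuclideanSpace ℝ (Fin n)) : BddBelow (costSet n L t x y) :=
  ⟨-K * t, fun _ hc => costSet_lower hL hα ht hc⟩

lemma costSet_nonempty (hL : IsLagrangian n α β K m L) {t : ℝ} (ht : 0 < t)
    (x y : EuclideanSpace ℝ (Fin n)) : (costSet n L t x y).Nonempty := by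
  refine ⟨_, (Good.line hL ht.le x (y - x)).mem_costSet (linePath_a 0 t x (y - x)) ?_⟩
  rw [linePath_b ht.ne x (y - x)]
  abel

lemma mCost_ge (hL : IsLagrangian n α β K m L) (hα : 0 < α) {t : ℝ} (ht : 0 < t)
    (x y : EuclideanSpace ℝ (Fin n)) : -K * t ≤ mCost n L t x y :=
  le_csInf (costSet_nonempty hL ht x y) (fun _ hc => costSet_lower hL hα ht.le hc)

lemma mCost_le_good (hL : IsLagrangian n α β K m L) (hα : 0 < α) {t : ℝ} (ht : 0 ≤ t)
    {ξ ξ' : ℝ → EuclideanSpace ℝ (Fin n)} (h : Good L 0 t ξ ξ')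
    {x y : EuclideanSpace ℝ (Fin n)} (h0 : ξ 0 = x) (hty : ξ t = y) :
    mCost n L t x y ≤ ∫ s in (0:ℝ)..t, L (ξ s) s (ξ' s) :=
  csInf_le (costSet_bddBelow hL hα ht x y) (h.mem_costSet h0 hty)

lemma mCost_line_le (hL : IsLagrangian n α β K m L) (hα : 0 < α) (hβ : 0 ≤ β) (hm0 : 0 ≤ m)
    {t D : ℝ} (ht : 0 < t) {x y : EuclideanSpace ℝ (Fin n)}
    (hD : ‖y - x‖ ≤ D * t) (hD0 : 0 ≤ D) :
    mCost n L t x y ≤ t * (β * D ^ m + K) := by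
  have hend : linePath 0 t x (y - x) t = y := by
    rw [linePath_b ht.ne x (y - x)]; abel
  refine (mCost_le_good hL hα ht.le (Good.line hL ht.le x (y - x))
    (linePath_a 0 t x (y - x)) hend).trans ?_
  have h2 : ‖(t - 0)⁻¹ • (y - x)‖ ≤ D := by
    rw [norm_smul, sub_zero, norm_inv, Real.norm_eq_abs, abs_of_pos ht]
    rw [inv_mul_le_iff₀ ht, mul_comm]
    exact hD
  have := line_cost_le hL hβ hm0 (by linarith : (0:ℝ) ≤ t) x (y - x) h2 hD0
  simpa using this

lemma exists_near_optimal (hL : IsLagrangian n α β K m L) (hα : 0 < α) {t : ℝ} (ht : 0 < t)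
    (x y : EuclideanSpace ℝ (Fin n)) {ε : ℝ} (hε : 0 < ε) :
    ∃ η η' : ℝ → EuclideanSpace ℝ (Fin n),
      AdmissibleOn n 0 t η η' ∧ η 0 = x ∧ η t = y ∧
      IntervalIntegrable (fun s => L (η s) s (η' s)) volume 0 t ∧
      (∫ s in (0:ℝ)..t, L (η s) s (η' s)) < mCost n L t x y + ε := by
  obtain ⟨c, hc, hlt⟩ := Real.lt_sInf_add_pos (costSet_nonempty hL ht x y) hε
  obtain ⟨η, η', hadm, h0, hty, hint, rfl⟩ := hc
  exact ⟨η, η', hadm, h0, hty, hint, hlt⟩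


lemma continuous_rpow_const {p : ℝ} (hp : 0 ≤ p) : Continuous (fun x : ℝ => x ^ p) :=
  continuous_iff_continuousAt.mpr (fun x => Real.continuousAt_rpow_const x _ (Or.inr hp))

/-- integrability of the energy `‖η'‖^m` along a pair with integrable cost -/
lemma energy_integrable (hL : IsLagrangian n α β K m L) (hα : 0 < α) (hm0 : 0 ≤ m)
    {T : ℝ} (hT : 0 ≤ T) {η η' : ℝ → EuclideanSpace ℝ (Fin n)}
    (hD : IntervalIntegrable η' volume 0 T)
    (hg : IntervalIntegrable (fun s => L (η s) s (η' s)) volume 0 T) :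
    IntervalIntegrable (fun s => ‖η' s‖ ^ m) volume 0 T := by
  rw [intervalIntegrable_iff_integrableOn_Ioo_of_le hT] at hD hg ⊢
  have hmeas : AEStronglyMeasurable (fun s => ‖η' s‖ ^ m)
      (volume.restrict (Set.Ioo (0:ℝ) T)) :=
    (continuous_rpow_const hm0).comp_aestronglyMeasurable hD.aestronglyMeasurable.norm
  have hbound : Integrable (fun s => (L (η s) s (η' s) + K) / α)
      (volume.restrict (Set.Ioo (0:ℝ) T)) := (hg.add (integrable_const K)).div_const α
  refine hbound.mono' hmeas ?_
  refine Filter.Eventually.of_forall (fun s => ?_)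
  have h1 := hL.lower_bound (η s) s (η' s)
  have h2 : (0:ℝ) ≤ ‖η' s‖ ^ m := Real.rpow_nonneg (norm_nonneg _) m
  rw [Real.norm_eq_abs, abs_of_nonneg h2, le_div_iff₀ hα]
  nlinarith

lemma energy_le (hL : IsLagrangian n α β K m L) (hα : 0 < α) (hm0 : 0 ≤ m)
    {T : ℝ} (hT : 0 ≤ T) {η η' : ℝ → EuclideanSpace ℝ (Fin n)}
    (hD : IntervalIntegrable η' volume 0 T)
    (hg : IntervalIntegrable (fun s => L (η s) s (η' s)) volume 0 T) :
    α * ∫ s in (0:ℝ)..T, ‖η' s‖ ^ m ≤ (∫ s in (0:ℝ)..T, L (η s) s (η' s)) + K * T := by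
  have hE := energy_integrable hL hα hm0 hT hD hg
  have h1 : ∫ s in (0:ℝ)..T, (α * ‖η' s‖ ^ m - K) ≤ ∫ s in (0:ℝ)..T, L (η s) s (η' s) := by
    apply intervalIntegral.integral_mono_on hT ((hE.const_mul α).sub intervalIntegrable_const) hg
    exact fun s _ => hL.lower_bound _ _ _
  rw [intervalIntegral.integral_sub (hE.const_mul α) intervalIntegrable_const,
    intervalIntegral.integral_const_mul, intervalIntegral.integral_const] at h1
  simp only [sub_zero, smul_eq_mul] at h1
  linarith

/-- pigeonhole: one of the `N` blocks `[4i, 4i+4] ⊆ [0, T]` has small integral -/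
lemma pigeonhole_block {f : ℝ → ℝ} {T : ℝ} (hf : IntervalIntegrable f volume 0 T)
    (hfnn : ∀ s ∈ Set.Icc (0:ℝ) T, 0 ≤ f s) {N : ℕ} (hN : 0 < N) (h4N : 4 * (N:ℝ) ≤ T) :
    ∃ i : ℕ, i < N ∧ (4 * (i:ℝ) + 4 ≤ T) ∧
      ∫ s in (4*(i:ℝ))..(4*(i:ℝ)+4), f s ≤ (∫ s in (0:ℝ)..T, f s) / N := by
  have hT : 0 ≤ T := le_trans (by positivity) h4N
  have hblocksub : ∀ i : ℕ, i < N → Set.uIcc (4*(i:ℝ)) (4*(i:ℝ)+4) ⊆ Set.uIcc 0 T := by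
    intro i hi
    have hi' : (i:ℝ) + 1 ≤ N := by exact_mod_cast Nat.succ_le_of_lt hi
    apply Set.uIcc_subset_uIcc
    · exact Set.mem_uIcc.mpr (Or.inl ⟨by positivity, by nlinarith⟩)
    · exact Set.mem_uIcc.mpr (Or.inl ⟨by positivity, by nlinarith⟩)
  have hint : ∀ i : ℕ, i < N → IntervalIntegrable f volume (4*(i:ℝ)) (4*(i:ℝ)+4) :=
    fun i hi => hf.mono_set (hblocksub i hi)
  have hsum : ∑ i ∈ Finset.range N, ∫ s in (4*(i:ℝ))..(4*((i:ℝ)+1)), f s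
      = ∫ s in (0:ℝ)..(4*(N:ℝ)), f s := by
    have := intervalIntegral.sum_integral_adjacent_intervals (f := f) (μ := volume)
      (a := fun k : ℕ => 4*(k:ℝ)) (n := N) ?_
    · simpa using this
    · intro k hk
      have := hint k hk
      convert this using 2
      push_cast; ring
  have htail : ∫ s in (0:ℝ)..(4*(N:ℝ)), f s ≤ ∫ s in (0:ℝ)..T, f s := by
    have hi1 : IntervalIntegrable f volume 0 (4*(N:ℝ)) :=
      hf.mono_set (Set.uIcc_subset_uIcc Set.left_mem_uIcc
        (Set.mem_uIcc.mpr (Or.inl ⟨by positivity, h4N⟩)))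
    have hi2 : IntervalIntegrable f volume (4*(N:ℝ)) T :=
      hf.mono_set (Set.uIcc_subset_uIcc
        (Set.mem_uIcc.mpr (Or.inl ⟨by positivity, h4N⟩)) Set.right_mem_uIcc)
    have hpos : 0 ≤ ∫ s in (4*(N:ℝ))..T, f s :=
      intervalIntegral.integral_nonneg h4N
        (fun u hu => hfnn u ⟨le_trans (by positivity) hu.1, hu.2⟩)
    have := intervalIntegral.integral_add_adjacent_intervals hi1 hi2
    linarith
  by_contra hcon
  push_neg at hcon
  have hlt : ∀ i ∈ Finset.range N, (∫ s in (0:ℝ)..T, f s) / N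
      < ∫ s in (4*(i:ℝ))..(4*((i:ℝ)+1)), f s := by
    intro i hi
    rw [Finset.mem_range] at hi
    have hi' : (i:ℝ) + 1 ≤ N := by exact_mod_cast Nat.succ_le_of_lt hi
    have h44 : 4*(i:ℝ)+4 ≤ T := by nlinarith
    have := hcon i hi h44
    have he : 4*((i:ℝ)+1) = 4*(i:ℝ)+4 := by ring
    rw [he]
    exact this
  have hN' : (0:ℝ) < N := by exact_mod_cast hN
  have := Finset.sum_lt_sum_of_nonempty (Finset.nonempty_range_iff.mpr hN.ne') hlt
  rw [hsum] at this
  rw [Finset.sum_const, Finset.card_range] at this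
  have : (N:ℝ) * ((∫ s in (0:ℝ)..T, f s) / N) < ∫ s in (0:ℝ)..(4*(N:ℝ)), f s := by
    simpa [nsmul_eq_mul] using this
  rw [mul_div_cancel₀ _ hN'.ne'] at this
  linarith

lemma r_le_rpow_add_one {r : ℝ} (hr : 0 ≤ r) (hm1 : 1 ≤ m) : r ≤ r ^ m + 1 := by
  rcases le_or_gt r 1 with h | h
  · have : (0:ℝ) ≤ r ^ m := Real.rpow_nonneg hr m
    linarith
  · have h1 : r ^ (1:ℝ) ≤ r ^ m := Real.rpow_le_rpow_of_exponent_le h.le hm1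
    rw [Real.rpow_one] at h1
    have : (0:ℝ) ≤ (1:ℝ) := zero_le_one
    linarith


lemma glue_left_val {X : Type*} {b : ℝ} {f g : ℝ → X} {s : ℝ} (h : s < b) :
    (fun s => if s < b then f s else g s) s = f s := by simp [h]

lemma glue_right_val {X : Type*} {b : ℝ} {f g : ℝ → X} {s : ℝ} (h : ¬ s < b) :
    (fun s => if s < b then f s else g s) s = g s := by simp [h]

/-- the constant in the doubling inequality -/
def cZero (n : ℕ) (α β K m M : ℝ) : ℝ :=
  5*K + 4*(β * (Real.sqrt n) ^ m + K)
    + β * (8 * ((β * M ^ m + 2*K + 1)/α) + 4) ^ m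

lemma intVec_norm_le {Y : EuclideanSpace ℝ (Fin n)} :
    ‖Y - intVec (fun i => round (Y i))‖ ≤ Real.sqrt n := by
  rw [EuclideanSpace.norm_eq]
  have h1 : ∀ i : Fin n, ‖(Y - intVec (fun i => round (Y i))) i‖ ^ 2 ≤ 1 := by
    intro i
    have h2 : (Y - intVec (fun i => round (Y i))) i = Y i - round (Y i) := rfl
    rw [h2, Real.norm_eq_abs]
    have h3 : |Y i - round (Y i)| ≤ 1 := (abs_sub_round _).trans (by norm_num)
    calc |Y i - (round (Y i) : ℝ)| ^ 2 ≤ 1 ^ 2 :=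
          pow_le_pow_left₀ (abs_nonneg _) h3 2
      _ = 1 := one_pow 2
  have h4 : ∑ i : Fin n, ‖(Y - intVec (fun i => round (Y i))) i‖ ^ 2 ≤ (n:ℝ) := by
    calc ∑ i : Fin n, ‖(Y - intVec (fun i => round (Y i))) i‖ ^ 2
        ≤ ∑ _i : Fin n, (1:ℝ) := Finset.sum_le_sum (fun i _ => h1 i)
      _ = (n:ℝ) := by simp
  exact (Real.sqrt_le_sqrt h4)

set_option maxHeartbeats 1000000 in
theorem doubling (hL : IsLagrangian n α β K m L) (hα : 0 < α) (hβ : 0 < β) (hK : 0 < K)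
    (hm : 1 < m) {M : ℝ} (hM : 0 < M) {T : ℝ} (hT : 16 ≤ T)
    {Y : EuclideanSpace ℝ (Fin n)} (hY : ‖Y‖ ≤ M * T) :
    mCost n L (2*T) 0 (Y + Y) ≤ 2 * mCost n L T 0 Y + cZero n α β K m M := by
  have hm0 : (0:ℝ) ≤ m := by linarith
  have hm1 : (1:ℝ) ≤ m := hm.le
  have hT0 : (0:ℝ) < T := by linarith
  have hMm : (0:ℝ) ≤ M ^ m := Real.rpow_nonneg hM.le m
  have hrho : (0:ℝ) ≤ Real.sqrt n := Real.sqrt_nonneg n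
  have hrhom : (0:ℝ) ≤ (Real.sqrt n) ^ m := Real.rpow_nonneg hrho m
  -- reduce to an ε-argument
  apply le_of_forall_pos_le_add
  intro δ hδ
  set ε := min (δ/2) (1/2) with hεdef
  have hε : 0 < ε := lt_min (by linarith) (by norm_num)
  have hε1 : ε ≤ 1/2 := min_le_right _ _
  have hεδ : 2*ε ≤ δ := by
    have := min_le_left (δ/2) (1/2); linarith
  obtain ⟨η, η', hadm, h0, hTY, hg, hcost⟩ :=
    exists_near_optimal hL hα hT0 0 Y hε
  set cst := mCost n L T 0 Y with hcst
  -- upper bound for cst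
  have hcstub : cst ≤ T * (β * M ^ m + K) := by
    apply mCost_line_le hL hα hβ.le hm0 hT0 _ hM.le
    simpa using hY
  -- energy bound
  have hEint : IntervalIntegrable (fun s => ‖η' s‖ ^ m) volume 0 T :=
    energy_integrable hL hα hm0 hT0.le hadm.1 hg
  have hEtot : ∫ s in (0:ℝ)..T, ‖η' s‖ ^ m ≤ ((β * M ^ m + 2*K + 1)/α) * T := by
    have h1 := energy_le hL hα hm0 hT0.le hadm.1 hg
    rw [div_mul_eq_mul_div, le_div_iff₀ hα]
    nlinarith
  -- pigeonhole block
  set N : ℕ := ⌊T/4⌋₊ - 1 with hNdef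
  have hfl4 : (4:ℝ) ≤ (⌊T/4⌋₊ : ℝ) := by
    have : (4:ℕ) ≤ ⌊T/4⌋₊ := Nat.le_floor (by push_cast; linarith)
    exact_mod_cast this
  have hNcast : (N:ℝ) = (⌊T/4⌋₊ : ℝ) - 1 := by
    have h1 : 1 ≤ ⌊T/4⌋₊ := by
      have : (4:ℕ) ≤ ⌊T/4⌋₊ := by exact_mod_cast hfl4
      omega
    rw [hNdef]
    push_cast [Nat.cast_sub h1]
    ring
  have hNpos : 0 < N := by
    have : (4:ℕ) ≤ ⌊T/4⌋₊ := by exact_mod_cast hfl4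
    omega
  have hNposr : (0:ℝ) < N := by exact_mod_cast hNpos
  have hflle : (⌊T/4⌋₊ : ℝ) ≤ T/4 := Nat.floor_le (by linarith)
  have hfllt : T/4 < (⌊T/4⌋₊ : ℝ) + 1 := Nat.lt_floor_add_one _
  have h4N : 4 * (N:ℝ) ≤ T := by rw [hNcast]; linarith
  have h8N : T ≤ 8 * (N:ℝ) := by rw [hNcast]; linarith
  obtain ⟨i, hiN, hq4T, hblock⟩ := pigeonhole_block hEint
    (fun s _ => Real.rpow_nonneg (norm_nonneg _) m) hNpos h4N
  set q : ℝ := 4 * (i:ℝ) with hqdef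
  have hq0 : 0 ≤ q := by positivity
  have hc1 : (0:ℝ) ≤ (β * M ^ m + 2*K + 1)/α := by positivity
  have hblock2 : ∫ s in q..(q+4), ‖η' s‖ ^ m ≤ 8 * ((β * M ^ m + 2*K + 1)/α) := by
    refine hblock.trans ?_
    rw [div_le_iff₀ hNposr]
    have htotnn : (0:ℝ) ≤ ∫ s in (0:ℝ)..T, ‖η' s‖ ^ m :=
      intervalIntegral.integral_nonneg (by linarith)
        (fun u _ => Real.rpow_nonneg (norm_nonneg (η' u)) m)
    nlinarith
  -- the jump distance bound
  have hsubq : Set.uIcc q (q+4) ⊆ Set.uIcc 0 T :=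
    Set.uIcc_subset_uIcc (Set.mem_uIcc.mpr (Or.inl ⟨hq0, by linarith⟩))
      (Set.mem_uIcc.mpr (Or.inl ⟨by linarith, hq4T⟩))
  have hD2 : ‖η (q+4) - η q‖ ≤ 8 * ((β * M ^ m + 2*K + 1)/α) + 4 := by
    have hiq : IntervalIntegrable η' volume q (q+4) := hadm.1.mono_set hsubq
    have hjump : η (q+4) - η q = ∫ u in q..(q+4), η' u := by
      have i0s : IntervalIntegrable η' volume 0 (q+4) :=
        hadm.1.mono_set (Set.uIcc_subset_uIcc Set.left_mem_uIcc
          (Set.mem_uIcc.mpr (Or.inl ⟨by linarith, hq4T⟩)))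
      have i0c : IntervalIntegrable η' volume 0 q :=
        hadm.1.mono_set (Set.uIcc_subset_uIcc Set.left_mem_uIcc
          (Set.mem_uIcc.mpr (Or.inl ⟨hq0, by linarith⟩)))
      have f1 : η (q+4) = η 0 + ∫ u in (0:ℝ)..(q+4), η' u := hadm.2 _ ⟨by linarith, hq4T⟩
      have f2 : η q = η 0 + ∫ u in (0:ℝ)..q, η' u := hadm.2 _ ⟨hq0, by linarith⟩
      rw [f1, f2, ← intervalIntegral.integral_interval_sub_left i0s i0c]
      abel
    rw [hjump]
    calc ‖∫ u in q..(q+4), η' u‖ ≤ ∫ u in q..(q+4), ‖η' u‖ :=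
          intervalIntegral.norm_integral_le_integral_norm (by linarith)
      _ ≤ ∫ u in q..(q+4), (‖η' u‖ ^ m + 1) := by
          apply intervalIntegral.integral_mono_on (by linarith) hiq.norm
            ((hEint.mono_set hsubq).add intervalIntegrable_const)
          exact fun u _ => r_le_rpow_add_one (norm_nonneg _) hm1
      _ = (∫ u in q..(q+4), ‖η' u‖ ^ m) + 4 := by
          rw [intervalIntegral.integral_add (hEint.mono_set hsubq) intervalIntegrable_const,
            intervalIntegral.integral_const]
          simp
      _ ≤ 8 * ((β * M ^ m + 2*K + 1)/α) + 4 := by linarith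
  -- integer data
  have hfl : ((⌊T⌋:ℤ):ℝ) ≤ T := Int.floor_le T
  have hfu : T < ((⌊T⌋:ℤ):ℝ) + 1 := Int.lt_floor_add_one T
  have hj1r : ((⌊T⌋ + 2 : ℤ):ℝ) = ((⌊T⌋:ℤ):ℝ) + 2 := by push_cast; ring
  have hj2r : ((⌊T⌋ - 1 : ℤ):ℝ) = ((⌊T⌋:ℤ):ℝ) - 1 := by push_cast; ring
  have hWY : ‖Y - intVec (fun i => round (Y i))‖ ≤ Real.sqrt n := intVec_norm_le
  -- orderings
  have h12 : T < 0 + ((⌊T⌋ + 2 : ℤ):ℝ) := by rw [hj1r]; linarith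
  have h23 : 0 + ((⌊T⌋ + 2 : ℤ):ℝ) ≤ q + ((⌊T⌋ + 2 : ℤ):ℝ) := by linarith
  have h34 : q + ((⌊T⌋ + 2 : ℤ):ℝ) < (q+4) + ((⌊T⌋ - 1 : ℤ):ℝ) := by rw [hj1r, hj2r]; linarith
  have h45 : (q+4) + ((⌊T⌋ - 1 : ℤ):ℝ) ≤ T + ((⌊T⌋ - 1 : ℤ):ℝ) := by linarith
  have h56 : T + ((⌊T⌋ - 1 : ℤ):ℝ) < 2*T := by rw [hj2r]; linarith
  have hd1u : (0 + ((⌊T⌋ + 2 : ℤ):ℝ)) - T ≤ 2 := by rw [hj1r]; linarith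
  have hd1l : 1 ≤ (0 + ((⌊T⌋ + 2 : ℤ):ℝ)) - T := by rw [hj1r]; linarith
  have hd3u : 2*T - (T + ((⌊T⌋ - 1 : ℤ):ℝ)) ≤ 2 := by rw [hj2r]; linarith
  have hd3l : 1 ≤ 2*T - (T + ((⌊T⌋ - 1 : ℤ):ℝ)) := by rw [hj2r]; linarith
  have hone : ((q+4) + ((⌊T⌋ - 1 : ℤ):ℝ)) - (q + ((⌊T⌋ + 2 : ℤ):ℝ)) = 1 := by rw [hj1r, hj2r]; ring
  have hJ2pos : (0:ℝ) < ((⌊T⌋ - 1 : ℤ):ℝ) := by rw [hj2r]; linarith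
  have hJ1pos : (0:ℝ) < ((⌊T⌋ + 2 : ℤ):ℝ) := by rw [hj1r]; linarith
  -- the six pieces
  have Gη : Good L 0 T η η' := ⟨hT0.le, hadm.1, hg, hadm.2⟩
  have G2 := Good.line hL (le_of_lt h12) Y (intVec (fun i => round (Y i)) - Y)
  have G3 := Good.copy hL hadm hg (⌊T⌋ + 2) (fun i => round (Y i))
    (le_refl (0:ℝ)) hq0 (by linarith : q ≤ T)
  have G4 := Good.line hL (le_of_lt h34) (η q + intVec (fun i => round (Y i))) (η (q+4) - η q)
  have G5 := Good.copy hL hadm hg (⌊T⌋ - 1) (fun i => round (Y i))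
    (by linarith : (0:ℝ) ≤ q+4) hq4T (le_refl T)
  have G6 := Good.line hL (le_of_lt h56) (Y + intVec (fun i => round (Y i))) (Y - intVec (fun i => round (Y i)))
  -- glue them
  have X2 := Gη.glue G2 (by rw [linePath_a]; exact hTY)
  have X3 := X2.glue G3 (by
    simp only []
    rw [if_neg (not_lt.mpr h12.le), linePath_b (ne_of_lt h12),
      show (0:ℝ) + ((⌊T⌋ + 2 : ℤ):ℝ) - ((⌊T⌋ + 2 : ℤ):ℝ) = 0 from by ring, h0]
    abel)
  have X4 := X3.glue G4 (by
    simp only []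
    rw [if_neg (not_lt.mpr h23), linePath_a,
      show q + ((⌊T⌋ + 2 : ℤ):ℝ) - ((⌊T⌋ + 2 : ℤ):ℝ) = q from by ring])
  have X5 := X4.glue G5 (by
    simp only []
    rw [if_neg (not_lt.mpr h34.le), linePath_b (ne_of_lt h34),
      show (q+4) + ((⌊T⌋ - 1 : ℤ):ℝ) - ((⌊T⌋ - 1 : ℤ):ℝ) = q+4 from by ring]
    abel)
  have X6 := X5.glue G6 (by
    simp only []
    rw [if_neg (not_lt.mpr h45), show T + ((⌊T⌋ - 1 : ℤ):ℝ) - ((⌊T⌋ - 1 : ℤ):ℝ) = T from by ring, hTY, linePath_a])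
  -- endpoints
  have hX0 : (0:ℝ) < q + ((⌊T⌋ + 2 : ℤ):ℝ) := by linarith
  have happly := mCost_le_good hL hα (by linarith : (0:ℝ) ≤ 2*T) X6
    (x := 0) (y := Y + Y)
    (by
      simp only []
      rw [if_pos (by linarith : (0:ℝ) < T + ((⌊T⌋ - 1 : ℤ):ℝ)),
        if_pos (by linarith : (0:ℝ) < (q+4) + ((⌊T⌋ - 1 : ℤ):ℝ)),
        if_pos hX0, if_pos (by linarith : (0:ℝ) < 0 + ((⌊T⌋ + 2 : ℤ):ℝ)), if_pos hT0, h0])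
    (by
      simp only []
      rw [if_neg (not_lt.mpr h56.le), linePath_b (ne_of_lt h56)]
      abel)
  rw [glue_cost X5 G6, glue_cost X4 G5, glue_cost X3 G4, glue_cost X2 G3,
    glue_cost Gη G2] at happly
  simp only [] at happly
  -- cost of the two copies
  have hA'eq : ∫ s in (0 + ((⌊T⌋ + 2 : ℤ):ℝ))..(q + ((⌊T⌋ + 2 : ℤ):ℝ)),
      L (η (s - ((⌊T⌋ + 2 : ℤ):ℝ)) + intVec (fun i => round (Y i))) s (η' (s - ((⌊T⌋ + 2 : ℤ):ℝ))) = ∫ s in (0:ℝ)..q, L (η s) s (η' s) := by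
    simpa using copy_cost (η := η) (η' := η') hL (⌊T⌋ + 2) (fun i => round (Y i)) 0 q
  have hB'eq : ∫ s in ((q+4) + ((⌊T⌋ - 1 : ℤ):ℝ))..(T + ((⌊T⌋ - 1 : ℤ):ℝ)),
      L (η (s - ((⌊T⌋ - 1 : ℤ):ℝ)) + intVec (fun i => round (Y i))) s (η' (s - ((⌊T⌋ - 1 : ℤ):ℝ))) = ∫ s in (q+4)..T, L (η s) s (η' s) := by
    simpa using copy_cost (η := η) (η' := η') hL (⌊T⌋ - 1) (fun i => round (Y i)) (q+4) T
  rw [hA'eq, hB'eq] at happly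
  -- bound the connectors
  have hApos : (0:ℝ) ≤ β * (Real.sqrt n) ^ m + K := by positivity
  have hc1b : ∫ s in T..(0 + ((⌊T⌋ + 2 : ℤ):ℝ)),
      L (linePath T (0 + ((⌊T⌋ + 2 : ℤ):ℝ)) Y (intVec (fun i => round (Y i)) - Y) s) s (((0 + ((⌊T⌋ + 2 : ℤ):ℝ)) - T)⁻¹ • (intVec (fun i => round (Y i)) - Y))
      ≤ 2 * (β * (Real.sqrt n) ^ m + K) := by
    have hvel : ‖((0 + ((⌊T⌋ + 2 : ℤ):ℝ)) - T)⁻¹ • (intVec (fun i => round (Y i)) - Y)‖ ≤ Real.sqrt n := by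
      rw [norm_smul, Real.norm_eq_abs, abs_of_pos (inv_pos.mpr (by linarith : (0:ℝ) < (0 + ((⌊T⌋ + 2 : ℤ):ℝ)) - T))]
      calc ((0 + ((⌊T⌋ + 2 : ℤ):ℝ)) - T)⁻¹ * ‖intVec (fun i => round (Y i)) - Y‖ ≤ 1 * (Real.sqrt n) := by
            apply mul_le_mul _ _ (norm_nonneg _) zero_le_one
            · rw [inv_le_one_iff₀]; right; linarith
            · rw [norm_sub_rev]; exact hWY
        _ = Real.sqrt n := one_mul _
    have := line_cost_le hL hβ.le hm0 h12.le Y (intVec (fun i => round (Y i)) - Y) hvel hrho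
    refine this.trans ?_
    exact mul_le_mul_of_nonneg_right hd1u hApos
  have hc2b : ∫ s in (q + ((⌊T⌋ + 2 : ℤ):ℝ))..((q+4) + ((⌊T⌋ - 1 : ℤ):ℝ)),
      L (linePath (q + ((⌊T⌋ + 2 : ℤ):ℝ)) ((q+4) + ((⌊T⌋ - 1 : ℤ):ℝ)) (η q + intVec (fun i => round (Y i))) (η (q+4) - η q) s) s
        ((((q+4) + ((⌊T⌋ - 1 : ℤ):ℝ)) - (q + ((⌊T⌋ + 2 : ℤ):ℝ)))⁻¹ • (η (q+4) - η q))
      ≤ 1 * (β * (8 * ((β * M ^ m + 2*K + 1)/α) + 4) ^ m + K) := by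
    have hE0nn : (0:ℝ) ≤ 8 * ((β * M ^ m + 2*K + 1)/α) + 4 := by positivity
    have hvel : ‖(((q+4) + ((⌊T⌋ - 1 : ℤ):ℝ)) - (q + ((⌊T⌋ + 2 : ℤ):ℝ)))⁻¹ • (η (q+4) - η q)‖ ≤ 8 * ((β * M ^ m + 2*K + 1)/α) + 4 := by
      rw [hone]
      simpa using hD2
    refine (line_cost_le hL hβ.le hm0 h34.le (η q + intVec (fun i => round (Y i)))
      (η (q+4) - η q) hvel hE0nn).trans ?_
    rw [hone]
  have hc3b : ∫ s in (T + ((⌊T⌋ - 1 : ℤ):ℝ))..(2*T),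
      L (linePath (T + ((⌊T⌋ - 1 : ℤ):ℝ)) (2*T) (Y + intVec (fun i => round (Y i))) (Y - intVec (fun i => round (Y i))) s) s
        ((2*T - (T + ((⌊T⌋ - 1 : ℤ):ℝ)))⁻¹ • (Y - intVec (fun i => round (Y i))))
      ≤ 2 * (β * (Real.sqrt n) ^ m + K) := by
    have hvel : ‖(2*T - (T + ((⌊T⌋ - 1 : ℤ):ℝ)))⁻¹ • (Y - intVec (fun i => round (Y i)))‖ ≤ Real.sqrt n := by
      rw [norm_smul, Real.norm_eq_abs, abs_of_pos (inv_pos.mpr (by linarith : (0:ℝ) < 2*T - (T + ((⌊T⌋ - 1 : ℤ):ℝ))))]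
      calc (2*T - (T + ((⌊T⌋ - 1 : ℤ):ℝ)))⁻¹ * ‖Y - intVec (fun i => round (Y i))‖ ≤ 1 * (Real.sqrt n) := by
            apply mul_le_mul _ hWY (norm_nonneg _) zero_le_one
            rw [inv_le_one_iff₀]; right; linarith
        _ = Real.sqrt n := one_mul _
    have := line_cost_le hL hβ.le hm0 h56.le (Y + intVec (fun i => round (Y i))) (Y - intVec (fun i => round (Y i))) hvel hrho
    refine this.trans ?_
    exact mul_le_mul_of_nonneg_right hd3u hApos
  -- split total η cost
  have hi0q : IntervalIntegrable (fun s => L (η s) s (η' s)) volume 0 q :=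
    hg.mono_set (Set.uIcc_subset_uIcc Set.left_mem_uIcc
      (Set.mem_uIcc.mpr (Or.inl ⟨hq0, by linarith⟩)))
  have hiq4 : IntervalIntegrable (fun s => L (η s) s (η' s)) volume q (q+4) :=
    hg.mono_set hsubq
  have hi4T : IntervalIntegrable (fun s => L (η s) s (η' s)) volume (q+4) T :=
    hg.mono_set (Set.uIcc_subset_uIcc
      (Set.mem_uIcc.mpr (Or.inl ⟨by linarith, hq4T⟩)) Set.right_mem_uIcc)
  have hi04 : IntervalIntegrable (fun s => L (η s) s (η' s)) volume 0 (q+4) :=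
    hg.mono_set (Set.uIcc_subset_uIcc Set.left_mem_uIcc
      (Set.mem_uIcc.mpr (Or.inl ⟨by linarith, hq4T⟩)))
  have hsplit : (∫ s in (0:ℝ)..q, L (η s) s (η' s)) + (∫ s in q..(q+4), L (η s) s (η' s))
      + (∫ s in (q+4)..T, L (η s) s (η' s)) = ∫ s in (0:ℝ)..T, L (η s) s (η' s) := by
    rw [intervalIntegral.integral_add_adjacent_intervals hi0q hiq4,
      intervalIntegral.integral_add_adjacent_intervals hi04 hi4T]
  have hmid : -(K*4) ≤ ∫ s in q..(q+4), L (η s) s (η' s) := by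
    have h1 : ∫ s in q..(q+4), (-K) ≤ ∫ s in q..(q+4), L (η s) s (η' s) :=
      intervalIntegral.integral_mono_on (by linarith) intervalIntegrable_const hiq4
        (fun s _ => cost_lb hL hα _ _ _)
    rw [intervalIntegral.integral_const] at h1
    simp only [smul_eq_mul] at h1
    linarith
  have hcost' := hcost.le
  rw [cZero]
  linarith


lemma cZero_nonneg {n : ℕ} {α β K m M : ℝ} (hα : 0 < α) (hβ : 0 < β) (hK : 0 < K)
    (hm0 : 0 ≤ m) (hM : 0 < M) : 0 ≤ cZero n α β K m M := by
  have h1 : (0:ℝ) ≤ (Real.sqrt n) ^ m := Real.rpow_nonneg (Real.sqrt_nonneg _) m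
  have h2 : (0:ℝ) ≤ M ^ m := Real.rpow_nonneg hM.le m
  have h3 : (0:ℝ) ≤ (8 * ((β * M ^ m + 2*K + 1)/α) + 4) ^ m :=
    Real.rpow_nonneg (by positivity) m
  unfold cZero
  nlinarith

theorem main (n : ℕ) (hn : 1 ≤ n) (α β K m : ℝ)
    (hα : 0 < α) (hβ : 0 < β) (hK : 0 < K) (hm : 1 < m) (M : ℝ) (hM : 0 < M) :
    ∃ C > 0,
      ∀ L : EuclideanSpace ℝ (Fin n) → ℝ → EuclideanSpace ℝ (Fin n) → ℝ,
        IsLagrangian n α β K m L →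
        ∀ t : ℝ, 0 < t → ∀ y : EuclideanSpace ℝ (Fin n), ‖y‖ ≤ M * t →
          Filter.limsup
              (fun k : ℕ => ((2 : ℝ) ^ k)⁻¹ * mCost n L ((2 : ℝ) ^ k * t) 0 (((2 : ℝ) ^ k) • y))
              Filter.atTop ≤
            mCost n L t 0 y + C := by
  have hm0 : (0:ℝ) ≤ m := by linarith
  have hMm : (0:ℝ) ≤ M ^ m := Real.rpow_nonneg hM.le m
  have hCz : 0 ≤ cZero n α β K m M := cZero_nonneg hα hβ hK hm0 hM
  refine ⟨cZero n α β K m M + 16*(β*M^m + K) + 16*K + 1, by positivity, ?_⟩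
  intro L hL t ht y hy
  set u : ℕ → ℝ := fun k => ((2:ℝ)^k)⁻¹ * mCost n L ((2:ℝ)^k * t) 0 (((2:ℝ)^k) • y) with hu
  have hp : ∀ k : ℕ, (0:ℝ) < 2^k := fun k => pow_pos two_pos k
  have hyk : ∀ k : ℕ, ‖((2:ℝ)^k) • y‖ ≤ M * ((2:ℝ)^k * t) := by
    intro k
    rw [norm_smul, Real.norm_eq_abs, abs_of_pos (hp k)]
    calc (2:ℝ)^k * ‖y‖ ≤ (2:ℝ)^k * (M*t) := mul_le_mul_of_nonneg_left hy (hp k).le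
      _ = M * ((2:ℝ)^k * t) := by ring
  have hlower : ∀ k : ℕ, -(K*t) ≤ u k := by
    intro k
    have h1 : -K * ((2:ℝ)^k * t) ≤ mCost n L ((2:ℝ)^k*t) 0 (((2:ℝ)^k) • y) :=
      mCost_ge hL hα (by positivity) _ _
    have h2 := mul_le_mul_of_nonneg_left h1 (inv_nonneg.mpr (hp k).le)
    have e : ((2:ℝ)^k)⁻¹ * (-K * ((2:ℝ)^k*t)) = -(K*t) := by
      field_simp
    rw [e] at h2
    exact h2
  have hstep : ∀ k : ℕ, 16 ≤ (2:ℝ)^k * t →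
      u (k+1) ≤ u k + cZero n α β K m M * ((2:ℝ)⁻¹)^(k+1) := by
    intro k hk
    have hdb := doubling hL hα hβ hK hm hM (T := (2:ℝ)^k * t) hk (Y := ((2:ℝ)^k) • y) (hyk k)
    have e1 : 2*((2:ℝ)^k*t) = (2:ℝ)^(k+1)*t := by ring
    have e2 : ((2:ℝ)^k) • y + ((2:ℝ)^k) • y = ((2:ℝ)^(k+1)) • y := by
      rw [← add_smul]; congr 1; ring
    rw [e1, e2] at hdb
    have h2 := mul_le_mul_of_nonneg_left hdb (inv_nonneg.mpr (hp (k+1)).le)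
    have e3 : ((2:ℝ)^(k+1))⁻¹ * (2 * mCost n L ((2:ℝ)^k*t) 0 (((2:ℝ)^k) • y)
        + cZero n α β K m M)
        = ((2:ℝ)^k)⁻¹ * mCost n L ((2:ℝ)^k*t) 0 (((2:ℝ)^k) • y)
          + cZero n α β K m M * ((2:ℝ)⁻¹)^(k+1) := by
      rw [pow_succ, pow_succ]
      have h4 : ((2:ℝ)^k) ≠ 0 := (hp k).ne'
      field_simp
      rw [one_div, inv_pow, mul_comm ((2:ℝ)^k) (cZero n α β K m M), mul_inv_cancel_right₀ h4]
    rw [e3] at h2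
    exact h2
  obtain ⟨k₀, hk₀, hbase⟩ : ∃ k₀ : ℕ, 16 ≤ (2:ℝ)^k₀ * t ∧
      u k₀ ≤ mCost n L t 0 y + (16*(β*M^m+K) + 16*K) := by
    by_cases h16 : 16 ≤ t
    · refine ⟨0, by simpa using h16, ?_⟩
      have he : u 0 = mCost n L t 0 y := by simp [hu]
      have hnn : (0:ℝ) ≤ 16*(β*M^m+K) + 16*K := by positivity
      rw [he]; linarith
    · push_neg at h16
      obtain ⟨k₀, hk₀'⟩ := pow_unbounded_of_one_lt (16/t) one_lt_two
      have h16k : (16:ℝ) ≤ (2:ℝ)^k₀ * t := ((div_lt_iff₀ ht).mp hk₀').le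
      refine ⟨k₀, h16k, ?_⟩
      have hup : mCost n L ((2:ℝ)^k₀*t) 0 (((2:ℝ)^k₀) • y)
          ≤ ((2:ℝ)^k₀*t) * (β*M^m + K) := by
        apply mCost_line_le hL hα hβ.le hm0 (by positivity) _ hM.le
        simpa using hyk k₀
      have h2 := mul_le_mul_of_nonneg_left hup (inv_nonneg.mpr (hp k₀).le)
      have e : ((2:ℝ)^k₀)⁻¹ * (((2:ℝ)^k₀*t)*(β*M^m+K)) = t*(β*M^m+K) := by
        field_simp
      rw [e] at h2
      have hge : -(K*t) ≤ mCost n L t 0 y := by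
        have := mCost_ge hL hα ht 0 y; linarith
      have hbMK : (0:ℝ) ≤ β*M^m + K := by positivity
      have huk : u k₀ ≤ t*(β*M^m+K) := h2
      nlinarith
  have hmono : ∀ k : ℕ, k₀ ≤ k → 16 ≤ (2:ℝ)^k * t := by
    intro k hk
    have h1 : (2:ℝ)^k₀ ≤ (2:ℝ)^k := pow_le_pow_right₀ one_le_two hk
    have := mul_le_mul_of_nonneg_right h1 ht.le
    linarith
  have hind : ∀ d : ℕ, u (k₀ + d) ≤ u k₀ + cZero n α β K m M * (1 - ((2:ℝ)⁻¹)^d) := by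
    intro d
    induction d with
    | zero => simp
    | succ d ih =>
      have hs := hstep (k₀ + d) (hmono _ (Nat.le_add_right _ _))
      have hhalf : ((2:ℝ)⁻¹)^(k₀+d+1) ≤ ((2:ℝ)⁻¹)^(d+1) :=
        pow_le_pow_of_le_one (by norm_num) (by norm_num) (by omega)
      have hstepc : cZero n α β K m M * ((2:ℝ)⁻¹)^(k₀+d+1)
          ≤ cZero n α β K m M * ((2:ℝ)⁻¹)^(d+1) :=
        mul_le_mul_of_nonneg_left hhalf hCz
      have e : (1 - ((2:ℝ)⁻¹)^d) + ((2:ℝ)⁻¹)^(d+1) = 1 - ((2:ℝ)⁻¹)^(d+1) := by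
        rw [pow_succ]; ring
      have : u (k₀ + (d+1)) ≤ u k₀ + cZero n α β K m M * ((1 - ((2:ℝ)⁻¹)^d) + ((2:ℝ)⁻¹)^(d+1)) := by
        rw [show k₀ + (d+1) = (k₀ + d) + 1 from rfl]
        rw [mul_add]
        linarith
      rw [e] at this
      exact this
  have hfinal : ∀ k : ℕ, k₀ ≤ k → u k ≤ mCost n L t 0 y
      + (cZero n α β K m M + 16*(β*M^m + K) + 16*K + 1) := by
    intro k hk
    obtain ⟨d, rfl⟩ := Nat.exists_eq_add_of_le hk
    have h1 := hind d
    have hx : (0:ℝ) ≤ ((2:ℝ)⁻¹)^d := by positivity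
    nlinarith
  apply Filter.limsup_le_of_le
  · have hb : Filter.IsBoundedUnder (· ≥ ·) Filter.atTop u :=
      ⟨-(K*t), Filter.eventually_map.mpr (Filter.Eventually.of_forall hlower)⟩
    exact hb.isCoboundedUnder_le
  · exact Filter.eventually_atTop.mpr ⟨k₀, hfinal⟩

end McostAux

/-- Dyadic limsup bound: for every `M > 0` there is `C > 0` depending only on
`K, M, n, α, β, m` such that for all `t > 0` and `|y| ≤ M t`,
`limsup_(k → ∞) 2⁻ᵏ m(2ᵏ t, 0, 2ᵏ y) ≤ m(t, 0, y) + C`. -/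
theorem mCost_limsup_le (n : ℕ) (hn : 1 ≤ n) (α β K m : ℝ)
    (hα : 0 < α) (hβ : 0 < β) (hK : 0 < K) (hm : 1 < m) (M : ℝ) (hM : 0 < M) :
    ∃ C > 0,
      ∀ L : EuclideanSpace ℝ (Fin n) → ℝ → EuclideanSpace ℝ (Fin n) → ℝ,
        IsLagrangian n α β K m L →
        ∀ t : ℝ, 0 < t → ∀ y : EuclideanSpace ℝ (Fin n), ‖y‖ ≤ M * t →
          Filter.limsup
              (fun k : ℕ => ((2 : ℝ) ^ k)⁻¹ * mCost n L ((2 : ℝ) ^ k * t) 0 (((2 : ℝ) ^ k) • y))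
              Filter.atTop ≤
            mCost n L t 0 y + C :=
  McostAux.main n hn α β K m hα hβ hK hm M hM

end
end

section
/- Fix M > 0. There exists a constant C > 0, depending only on K, M, n, α, β and m, with the following property. Let t > 4(n+4)², let y ∈ ℝⁿ with |y| ≤ Mt, and let η : [0,2t] → ℝⁿ be absolutely continuous with η(0) = 0, η(2t) = 2y and ∫₀^{2t} L(η(s), s, η̇(s)) ds ≤ m(2t, 0, 2y) + 1. Suppose [a₁,b₁], …, [aₖ,bₖ] are pairwise disjoint closed subintervals of [0,2t] with k ≤ (n+2)/2, ∑_{i=1}^{k} (η(bᵢ) − η(aᵢ)) = y and ∑_{i=1}^{k} (bᵢ − aᵢ) = t. Then m(t, 0, y) ≤ ∑_{i=1}^{k} ∫_{aᵢ}^{bᵢ} L(η(s), s, η̇(s)) ds + C. -/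
open MeasureTheory Filter

noncomputable section

namespace BG

abbrev Euc (n : ℕ) := EuclideanSpace ℝ (Fin n)

def intVec (n : ℕ) (w : Fin n → ℤ) : Euc n := WithLp.toLp 2 (fun i => (w i : ℝ))

variable {n : ℕ} {α β K m : ℝ}
variable {L : Euc n → ℝ → Euc n → ℝ}

theorem mCost_le {t : ℝ} (ht : 0 ≤ t) (hLB : ∀ x s v, -K ≤ L x s v)
    {x y : Euc n} {η η' : ℝ → Euc n}
    (hadm : AdmissibleOn n 0 t η η') (h0 : η 0 = x) (hT : η t = y)
    (hint : IntervalIntegrable (fun s => L (η s) s (η' s)) volume 0 t) :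
    mCost n L t x y ≤ ∫ s in (0:ℝ)..t, L (η s) s (η' s) := by
  refine csInf_le ⟨-(K*t), ?_⟩ ⟨η, η', hadm, h0, hT, hint, rfl⟩
  rintro c ⟨ζ, ζ', hadm', h0', hT', hint', rfl⟩
  have h1 : ∫ s in (0:ℝ)..t, (-K) ≤ ∫ s in (0:ℝ)..t, L (ζ s) s (ζ' s) :=
    intervalIntegral.integral_mono_on ht (intervalIntegrable_const) hint'
      (fun s _ => hLB _ _ _)
  have h2 : ∫ s in (0:ℝ)..t, (-K : ℝ) = -(K*t) := by
    simp [intervalIntegral.integral_const]; ring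
  linarith


theorem rep_sub {T : ℝ} {η η' : ℝ → Euc n} (hadm : AdmissibleOn n 0 T η η')
    {u v : ℝ} (hu : u ∈ Set.Icc 0 T) (hv : v ∈ Set.Icc 0 T) :
    η v = η u + ∫ s in u..v, η' s := by
  have hT0 : (0:ℝ) ≤ T := le_trans hu.1 hu.2
  have hsub : Set.uIcc u v ⊆ Set.uIcc 0 T := by
    rw [Set.uIcc_of_le hT0]
    exact Set.uIcc_subset_Icc hu hv
  have h0u : IntervalIntegrable η' volume 0 u :=
    hadm.1.mono_set (by rw [Set.uIcc_of_le hT0]; exact Set.uIcc_subset_Icc ⟨le_refl 0, hT0⟩ hu)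
  have huv : IntervalIntegrable η' volume u v := hadm.1.mono_set hsub
  have e1 := hadm.2 u hu
  have e2 := hadm.2 v hv
  rw [e1, e2, ← intervalIntegral.integral_add_adjacent_intervals h0u huv]
  abel


theorem round_near (P x : Euc n) :
    ∃ w : Fin n → ℤ, ‖x + intVec n w - P‖ ≤ Real.sqrt n := by
  refine ⟨fun i => ⌊P i - x i⌋, ?_⟩
  rw [EuclideanSpace.norm_eq]
  have hb : ∀ i : Fin n, ‖(x + intVec n (fun i => ⌊P i - x i⌋) - P) i‖ ^ 2 ≤ 1 := by
    intro i
    have e1 : (x + intVec n (fun i => ⌊P i - x i⌋) - P) i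
        = x i + (⌊P i - x i⌋ : ℝ) - P i := by
      rw [PiLp.sub_apply, PiLp.add_apply]; rfl
    rw [e1, Real.norm_eq_abs]
    have h2 : |x i + (⌊P i - x i⌋:ℝ) - P i| ≤ 1 := by
      have h3 := Int.fract_nonneg (P i - x i)
      have h4 := Int.fract_lt_one (P i - x i)
      have h5 : Int.fract (P i - x i) = (P i - x i) - ⌊P i - x i⌋ :=
        (Int.self_sub_floor _).symm
      rw [h5] at h3 h4
      rw [abs_le]
      constructor <;> linarith
    calc |x i + (⌊P i - x i⌋:ℝ) - P i| ^ 2 ≤ 1 ^ 2 := by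
          refine pow_le_pow_left₀ (abs_nonneg _) h2 2
    _ = 1 := one_pow 2
  have hsum : ∑ i : Fin n, ‖(x + intVec n (fun i => ⌊P i - x i⌋) - P) i‖ ^ 2 ≤ (n : ℝ) := by
    calc ∑ i : Fin n, ‖(x + intVec n (fun i => ⌊P i - x i⌋) - P) i‖ ^ 2
        ≤ ∑ _i : Fin n, (1:ℝ) := Finset.sum_le_sum fun i _ => hb i
    _ = (n : ℝ) := by simp
  calc Real.sqrt (∑ i : Fin n, ‖(x + intVec n (fun i => ⌊P i - x i⌋) - P) i‖ ^ 2)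
      ≤ Real.sqrt n := Real.sqrt_le_sqrt hsum
  _ = Real.sqrt n := rfl

theorem line_spec (hL : IsLagrangian n α β K m L) (hβ : 0 ≤ β) (hm : 0 ≤ m)
    {u v V : ℝ} (huv : u < v) (P Q : Euc n)
    (hV : ‖Q - P‖ / (v - u) ≤ V) (hV0 : 0 ≤ V) :
    ∃ ξ ξ' : ℝ → Euc n,
      AdmissibleOn n u v ξ ξ' ∧ ξ u = P ∧ ξ v = Q ∧
      IntervalIntegrable (fun s => L (ξ s) s (ξ' s)) volume u v ∧
      ∫ s in u..v, L (ξ s) s (ξ' s) ≤ (β * V ^ m + K) * (v - u) := by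
  have hd : 0 < v - u := sub_pos.2 huv
  set D : Euc n := Q - P with hD
  refine ⟨fun s => P + ((s - u)/(v-u)) • D, fun _ => (v-u)⁻¹ • D, ⟨?_, ?_⟩, ?_, ?_, ?_, ?_⟩
  · exact intervalIntegrable_const
  · intro s _
    rw [intervalIntegral.integral_const]
    simp [smul_smul, div_eq_mul_inv, mul_comm]
  · simp
  · have h1 : (v - u)/(v - u) = 1 := div_self hd.ne'
    simp only [h1, one_smul, hD]
    abel
  · apply Continuous.intervalIntegrable
    exact hL.cont.comp ((continuous_const.add (((continuous_id.sub continuous_const).div_const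
      _).smul continuous_const)).prodMk (continuous_id.prodMk continuous_const))
  · have hnorm : ‖(v-u)⁻¹ • D‖ = ‖D‖ / (v - u) := by
      rw [norm_smul, norm_inv, Real.norm_eq_abs, abs_of_pos hd, div_eq_inv_mul]
    have hb : ∀ s ∈ Set.Icc u v,
        L (P + ((s - u)/(v-u)) • D) s ((v-u)⁻¹ • D) ≤ β * V ^ m + K := by
      intro s _
      refine (hL.upper_bound _ _ _).trans (add_le_add ?_ (le_refl K))
      refine mul_le_mul_of_nonneg_left ?_ hβ
      refine Real.rpow_le_rpow (norm_nonneg _) ?_ hm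
      rw [hnorm]; exact hV
    have h1 : ∫ s in u..v, L (P + ((s - u)/(v-u)) • D) s ((v-u)⁻¹ • D)
        ≤ ∫ _ in u..v, (β * V ^ m + K) := by
      refine intervalIntegral.integral_mono_on huv.le ?_ intervalIntegrable_const hb
      apply Continuous.intervalIntegrable
      exact hL.cont.comp ((continuous_const.add (((continuous_id.sub continuous_const).div_const
        _).smul continuous_const)).prodMk (continuous_id.prodMk continuous_const))
    calc _ ≤ ∫ _ in u..v, (β * V ^ m + K) := h1
    _ = (β * V ^ m + K) * (v - u) := by rw [intervalIntegral.integral_const]; simp [mul_comm]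

theorem piece_spec (hL : IsLagrangian n α β K m L)
    {T : ℝ} {η η' : ℝ → Euc n} (hadm : AdmissibleOn n 0 T η η')
    (hηint : IntervalIntegrable (fun s => L (η s) s (η' s)) volume 0 T)
    {a b : ℝ} (ha : 0 ≤ a) (hab : a ≤ b) (hb : b ≤ T)
    (τ : ℤ) (w : Fin n → ℤ) :
    AdmissibleOn n (a - τ) (b - τ) (fun s => η (s + τ) + intVec n w) (fun s => η' (s + τ)) ∧
    IntervalIntegrable
      (fun s => L (η (s + τ) + intVec n w) s (η' (s + τ))) volume (a - τ) (b - τ) ∧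
    ∫ s in (a - (τ:ℝ))..(b - τ), L (η (s + τ) + intVec n w) s (η' (s + τ))
      = ∫ s in a..b, L (η s) s (η' s) := by
  have hT0 : (0:ℝ) ≤ T := le_trans ha (le_trans hab hb)
  have hsubab : Set.uIcc a b ⊆ Set.uIcc 0 T := by
    rw [Set.uIcc_of_le hT0]
    exact Set.uIcc_subset_Icc ⟨ha, le_trans hab hb⟩ ⟨le_trans ha hab, hb⟩
  have hint' : IntervalIntegrable η' volume a b := hadm.1.mono_set hsubab
  have hLab : IntervalIntegrable (fun s => L (η s) s (η' s)) volume a b := hηint.mono_set hsubab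
  have hper : ∀ s : ℝ, L (η (s + τ) + intVec n w) s (η' (s + τ))
      = L (η (s + τ)) (s + τ) (η' (s + τ)) := by
    intro s
    have h0 := hL.periodic (η (s + τ)) (η' (s + τ)) (s + τ) w (-τ)
    have e1 : (WithLp.toLp 2 (fun i => (η (s + (τ:ℝ))) i + ((w i : ℤ) : ℝ)) : Euc n)
        = η (s + τ) + intVec n w := by
      ext i; rw [PiLp.add_apply]; rfl
    have e2 : (s + (τ:ℝ)) + ((-τ : ℤ) : ℝ) = s := by push_cast; ring
    rw [e1, e2] at h0
    exact h0
  have hfe : (fun s => L (η (s + τ) + intVec n w) s (η' (s + τ)))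
      = fun s => (fun u => L (η u) u (η' u)) (s + (τ:ℝ)) := funext fun s => hper s
  refine ⟨⟨hint'.comp_add_right τ, ?_⟩, ?_, ?_⟩
  · intro s hs
    have hsτ : s + (τ:ℝ) ∈ Set.Icc a b := by
      constructor
      · linarith [hs.1]
      · linarith [hs.2]
    have hrep := rep_sub hadm (show a ∈ Set.Icc 0 T from ⟨ha, le_trans hab hb⟩)
      (show s + (τ:ℝ) ∈ Set.Icc 0 T from ⟨le_trans ha hsτ.1, le_trans hsτ.2 hb⟩)
    show η (s + τ) + intVec n w = η ((a - (τ:ℝ)) + τ) + intVec n w + ∫ u in (a - (τ:ℝ))..s, η' (u + τ)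
    have e3 : a - (τ:ℝ) + τ = a := by ring
    have e4 : ∫ u in (a - (τ:ℝ))..s, η' (u + τ) = ∫ u in a..(s + τ), η' u := by
      rw [intervalIntegral.integral_comp_add_right η' (τ:ℝ), e3]
    rw [e3, e4, hrep]
    abel
  · rw [hfe]
    have := hLab.comp_add_right (τ:ℝ)
    exact this
  · rw [hfe]
    have h6 := intervalIntegral.integral_comp_add_right (a := a - (τ:ℝ)) (b := b - τ)
      (fun u => L (η u) u (η' u)) (τ:ℝ)
    have e3 : a - (τ:ℝ) + τ = a := by ring
    have e5 : b - (τ:ℝ) + τ = b := by ring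
    rw [e3, e5] at h6
    exact h6

theorem glue_spec {u v w : ℝ} (huv : u ≤ v) (hvw : v ≤ w)
    {ξ₁ ξ₁' ξ₂ ξ₂' : ℝ → Euc n}
    (h1 : AdmissibleOn n u v ξ₁ ξ₁') (h2 : AdmissibleOn n v w ξ₂ ξ₂')
    (hmatch : ξ₁ v = ξ₂ v)
    (hc1 : IntervalIntegrable (fun s => L (ξ₁ s) s (ξ₁' s)) volume u v)
    (hc2 : IntervalIntegrable (fun s => L (ξ₂ s) s (ξ₂' s)) volume v w) :
    ∃ ξ ξ' : ℝ → Euc n,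
      AdmissibleOn n u w ξ ξ' ∧ ξ u = ξ₁ u ∧ ξ w = ξ₂ w ∧
      IntervalIntegrable (fun s => L (ξ s) s (ξ' s)) volume u w ∧
      ∫ s in u..w, L (ξ s) s (ξ' s) =
        (∫ s in u..v, L (ξ₁ s) s (ξ₁' s)) + ∫ s in v..w, L (ξ₂ s) s (ξ₂' s) := by
  classical
  set ξ : ℝ → Euc n := fun s => if s ≤ v then ξ₁ s else ξ₂ s with hξdef
  set ξ' : ℝ → Euc n := fun s => if s < v then ξ₁' s else ξ₂' s with hξ'def
  have hne : ∀ᵐ s : ℝ ∂(volume : Measure ℝ), s ≠ v := by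
    rw [ae_iff]
    simpa using (measure_singleton v : (volume : Measure ℝ) {v} = 0)
  have hxeq1 : ∀ s, s ≤ v → ξ s = ξ₁ s := fun s hs => if_pos hs
  have hxeq2 : ∀ s, v < s → ξ s = ξ₂ s := fun s hs => if_neg (not_le.2 hs)
  have hx2v : ∀ s, v ≤ s → ξ s = ξ₂ s := by
    intro s hs
    rcases eq_or_lt_of_le hs with h | h
    · rw [← h]
      show ξ v = ξ₂ v
      rw [hxeq1 v le_rfl, hmatch]
    · exact hxeq2 s h
  have hd1 : ∀ s, s < v → ξ' s = ξ₁' s := fun s hs => if_pos hs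
  have hd2 : ∀ s, v ≤ s → ξ' s = ξ₂' s := fun s hs => if_neg (not_lt.2 hs)
  -- interval integrability of ξ' on subintervals of [u,v]
  have hII1 : ∀ {p q : ℝ}, u ≤ p → p ≤ q → q ≤ v → IntervalIntegrable ξ' volume p q := by
    intro p q hp hpq hq
    rw [intervalIntegrable_iff]
    have hbase : IntegrableOn ξ₁' (Set.uIoc p q) volume :=
      intervalIntegrable_iff.1 (h1.1.mono_set
        (Set.uIcc_subset_uIcc (by rw [Set.uIcc_of_le huv]; exact Set.mem_Icc.2 ⟨hp, le_trans hpq hq⟩)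
          (by rw [Set.uIcc_of_le huv]; exact Set.mem_Icc.2 ⟨le_trans hp hpq, hq⟩)))
    refine hbase.congr ?_
    refine (ae_restrict_iff' measurableSet_uIoc).2 (hne.mono fun s hs hmem => ?_)
    rw [Set.uIoc_of_le hpq] at hmem
    exact (hd1 s (lt_of_le_of_ne (le_trans hmem.2 hq) hs)).symm
  have hII2 : ∀ {p q : ℝ}, v ≤ p → p ≤ q → q ≤ w → IntervalIntegrable ξ' volume p q := by
    intro p q hp hpq hq
    rw [intervalIntegrable_iff]
    have hbase : IntegrableOn ξ₂' (Set.uIoc p q) volume :=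
      intervalIntegrable_iff.1 (h2.1.mono_set
        (Set.uIcc_subset_uIcc (by rw [Set.uIcc_of_le hvw]; exact Set.mem_Icc.2 ⟨hp, le_trans hpq hq⟩)
          (by rw [Set.uIcc_of_le hvw]; exact Set.mem_Icc.2 ⟨le_trans hp hpq, hq⟩)))
    refine hbase.congr ?_
    refine (ae_restrict_iff' measurableSet_uIoc).2 (Eventually.of_forall fun s hmem => ?_)
    rw [Set.uIoc_of_le hpq] at hmem
    exact (hd2 s (le_trans hp hmem.1.le)).symm
  have hIeq1 : ∀ {p q : ℝ}, u ≤ p → p ≤ q → q ≤ v →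
      (∫ x in p..q, ξ' x) = ∫ x in p..q, ξ₁' x := by
    intro p q hp hpq hq
    refine intervalIntegral.integral_congr_ae (hne.mono fun s hs hmem => ?_)
    rw [Set.uIoc_of_le hpq] at hmem
    exact hd1 s (lt_of_le_of_ne (le_trans hmem.2 hq) hs)
  have hIeq2 : ∀ {p q : ℝ}, v ≤ p → p ≤ q →
      (∫ x in p..q, ξ' x) = ∫ x in p..q, ξ₂' x := by
    intro p q hp hpq
    refine intervalIntegral.integral_congr fun s hs => ?_
    rw [Set.uIcc_of_le hpq] at hs
    exact hd2 s (le_trans hp hs.1)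
  have hxu : ξ u = ξ₁ u := hxeq1 u huv
  have hxw : ξ w = ξ₂ w := hx2v w hvw
  have hrep : ∀ s ∈ Set.Icc u w, ξ s = ξ u + ∫ x in u..s, ξ' x := by
    intro s hs
    rcases le_or_gt s v with h | h
    · rw [hxeq1 s h, hxu, hIeq1 le_rfl hs.1 h]
      exact h1.2 s ⟨hs.1, h⟩
    · have hadd : (∫ x in u..v, ξ' x) + ∫ x in v..s, ξ' x = ∫ x in u..s, ξ' x :=
        intervalIntegral.integral_add_adjacent_intervals (hII1 le_rfl huv le_rfl)
          (hII2 le_rfl h.le hs.2)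
      rw [hxeq2 s h, h2.2 s ⟨h.le, hs.2⟩, hxu, ← hadd, hIeq1 le_rfl huv le_rfl,
        hIeq2 le_rfl h.le, ← hmatch, h1.2 v ⟨huv, le_rfl⟩]
      abel
  -- cost congruences
  have hGae1 : ∀ᵐ s ∂(volume : Measure ℝ), s ∈ Set.uIoc u v →
      L (ξ₁ s) s (ξ₁' s) = L (ξ s) s (ξ' s) := by
    refine hne.mono fun s hs hmem => ?_
    rw [Set.uIoc_of_le huv] at hmem
    have hlt : s < v := lt_of_le_of_ne hmem.2 hs
    rw [hxeq1 s hlt.le, hd1 s hlt]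
  have hGeq2 : Set.EqOn (fun s => L (ξ₂ s) s (ξ₂' s)) (fun s => L (ξ s) s (ξ' s))
      (Set.uIcc v w) := by
    intro s hs
    rw [Set.uIcc_of_le hvw] at hs
    simp only
    rw [hx2v s hs.1, hd2 s hs.1]
  have hGII1 : IntervalIntegrable (fun s => L (ξ s) s (ξ' s)) volume u v := by
    rw [intervalIntegrable_iff]
    exact (intervalIntegrable_iff.1 hc1).congr ((ae_restrict_iff' measurableSet_uIoc).2 hGae1)
  have hGII2 : IntervalIntegrable (fun s => L (ξ s) s (ξ' s)) volume v w := by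
    rw [intervalIntegrable_iff]
    refine (intervalIntegrable_iff.1 hc2).congr ((ae_restrict_iff' measurableSet_uIoc).2
      (Eventually.of_forall fun s hmem => ?_))
    exact hGeq2 (Set.uIoc_subset_uIcc hmem)
  refine ⟨ξ, ξ', ⟨(hII1 le_rfl huv le_rfl).trans (hII2 le_rfl hvw le_rfl), hrep⟩, hxu, hxw,
    hGII1.trans hGII2, ?_⟩
  rw [← intervalIntegral.integral_add_adjacent_intervals hGII1 hGII2]
  congr 1
  · exact (intervalIntegral.integral_congr_ae hGae1).symm
  · exact (intervalIntegral.integral_congr hGeq2).symm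


theorem blocks_spec (hL : IsLagrangian n α β K m L) (hβ : 0 ≤ β) (hm : 0 ≤ m) (hK : 0 ≤ K)
    {T : ℝ} {η η' : ℝ → Euc n} (hadm : AdmissibleOn n 0 T η η')
    (hηint : IntervalIntegrable (fun s => L (η s) s (η' s)) volume 0 T)
    (pcs : List (ℝ × ℝ)) :
    (∀ p ∈ pcs, 0 ≤ p.1 ∧ p.1 ≤ p.2 ∧ p.2 ≤ T) →
    ∀ S₀ : ℝ, ∀ P₀ : Euc n,
    ∃ ξ ξ' : ℝ → Euc n, ∃ S₁ : ℝ,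
      S₀ + (pcs.map (fun p => p.2 - p.1)).sum + pcs.length ≤ S₁ ∧
      S₁ ≤ S₀ + (pcs.map (fun p => p.2 - p.1)).sum + 2 * pcs.length ∧
      AdmissibleOn n S₀ S₁ ξ ξ' ∧ ξ S₀ = P₀ ∧
      ‖ξ S₁ - (P₀ + (pcs.map (fun p => η p.2 - η p.1)).sum)‖ ≤ pcs.length * Real.sqrt n ∧
      IntervalIntegrable (fun s => L (ξ s) s (ξ' s)) volume S₀ S₁ ∧
      ∫ s in S₀..S₁, L (ξ s) s (ξ' s) ≤
        (pcs.map (fun p => ∫ s in p.1..p.2, L (η s) s (η' s))).sum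
          + pcs.length * (2 * (β * (Real.sqrt n) ^ m + K)) := by
  induction pcs with
  | nil =>
    intro hpcs S₀ P₀
    refine ⟨fun _ => P₀, fun _ => 0, S₀, by simp, by simp,
      ⟨intervalIntegrable_const, ?_⟩, rfl, by simp, IntervalIntegrable.refl, by simp⟩
    intro s hs
    have hs' : s = S₀ := le_antisymm hs.2 hs.1
    rw [hs']
    simp
  | cons p rest ih =>
    intro hpcs S₀ P₀
    obtain ⟨a, b⟩ := p
    obtain ⟨ha0, hab, hbT⟩ := hpcs (a, b) List.mem_cons_self
    have hrest : ∀ p ∈ rest, 0 ≤ p.1 ∧ p.1 ≤ p.2 ∧ p.2 ≤ T :=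
      fun p hp => hpcs p (List.mem_cons_of_mem _ hp)
    -- connector duration and integer time shift
    set d : ℝ := 1 + Int.fract (a - S₀) with hd
    have hd1 : 1 ≤ d := by
      have := Int.fract_nonneg (a - S₀); rw [hd]; linarith
    have hd2 : d ≤ 2 := by
      have := Int.fract_lt_one (a - S₀); rw [hd]; linarith
    set τ : ℤ := ⌊a - S₀⌋ - 1 with hτ
    have hfr : Int.fract (a - S₀) = (a - S₀) - ⌊a - S₀⌋ := (Int.self_sub_floor _).symm
    have hτa : a - (τ:ℝ) = S₀ + d := by
      rw [hτ, hd, hfr]; push_cast; ring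
    have hτb : b - (τ:ℝ) = S₀ + d + (b - a) := by
      rw [hτ, hd, hfr]; push_cast; ring
    -- integer space shift
    obtain ⟨w, hw⟩ := round_near P₀ (η a)
    set Q : Euc n := η a + intVec n w with hQ
    -- the shifted piece
    obtain ⟨hadm_p, hint_p, hcost_p⟩ := piece_spec hL hadm hηint ha0 hab hbT τ w
    -- connector from (S₀, P₀) to (a - τ, Q)
    have hlt : S₀ < a - (τ:ℝ) := by rw [hτa]; linarith
    have hspeed : ‖Q - P₀‖ / ((a - (τ:ℝ)) - S₀) ≤ Real.sqrt n := by
      have e : (a - (τ:ℝ)) - S₀ = d := by rw [hτa]; ring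
      rw [e]
      exact le_trans (div_le_self (norm_nonneg _) hd1) hw
    obtain ⟨c₁, c₁', hadm_c, hc0, hcv, hintc, hcostc⟩ :=
      line_spec hL hβ hm hlt P₀ Q hspeed (Real.sqrt_nonneg n)
    -- glue connector and piece
    have hmatch1 : c₁ (a - (τ:ℝ)) = (fun s => η (s + τ) + intVec n w) (a - (τ:ℝ)) := by
      rw [hcv]
      show Q = η ((a - (τ:ℝ)) + τ) + intVec n w
      rw [hQ]
      congr 2
      ring
    have hab' : a - (τ:ℝ) ≤ b - (τ:ℝ) := by linarith
    obtain ⟨ξ₁, ξ₁', hadm1, hx1u, hx1w, hint1, hcost1⟩ :=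
      glue_spec hlt.le hab' hadm_c hadm_p hmatch1 hintc hint_p
    -- apply the induction hypothesis from the end of the piece
    obtain ⟨ξ₂, ξ₂', S₁, hS₁l, hS₁u, hadm2, hx2u, hdrift2, hint2, hcost2⟩ :=
      ih hrest (b - (τ:ℝ)) (η b + intVec n w)
    have hsums : (0:ℝ) ≤ (rest.map (fun p => p.2 - p.1)).sum := by
      refine List.sum_nonneg ?_
      intro x hx
      obtain ⟨p, hp, rfl⟩ := List.mem_map.1 hx
      have := hrest p hp
      linarith [this.2.1]
    have hlen0 : (0:ℝ) ≤ (rest.length : ℝ) := Nat.cast_nonneg _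
    have hbS₁ : b - (τ:ℝ) ≤ S₁ := by linarith
    -- glue the two
    have hSab : S₀ ≤ b - (τ:ℝ) := by linarith
    have hmatch2 : ξ₁ (b - (τ:ℝ)) = ξ₂ (b - (τ:ℝ)) := by
      rw [hx1w, hx2u]
      show η ((b - (τ:ℝ)) + τ) + intVec n w = _
      congr 2
      ring
    obtain ⟨ξ, ξ', hadmF, hxu, hxw, hintF, hcostF⟩ :=
      glue_spec hSab hbS₁ hadm1 hadm2 hmatch2 hint1 hint2
    refine ⟨ξ, ξ', S₁, ?_, ?_, hadmF, ?_, ?_, hintF, ?_⟩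
    · simp only [List.map_cons, List.sum_cons, List.length_cons]
      push_cast
      linarith
    · simp only [List.map_cons, List.sum_cons, List.length_cons]
      push_cast
      linarith
    · rw [hxu, hx1u, hc0]
    · simp only [List.map_cons, List.sum_cons, List.length_cons]
      have e1 : ξ S₁ - (P₀ + (η b - η a + (rest.map (fun p => η p.2 - η p.1)).sum))
          = (ξ₂ S₁ - (η b + intVec n w + (rest.map (fun p => η p.2 - η p.1)).sum))
            + (Q - P₀) := by
        rw [hxw, hQ]
        abel
      rw [e1]
      push_cast
      calc ‖_ + (Q - P₀)‖ ≤ ‖ξ₂ S₁ - (η b + intVec n w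
            + (rest.map (fun p => η p.2 - η p.1)).sum)‖ + ‖Q - P₀‖ := norm_add_le _ _
      _ ≤ (rest.length : ℝ) * Real.sqrt n + 1 * Real.sqrt n := by
          refine add_le_add hdrift2 ?_
          rw [one_mul]; exact hw
      _ = ((rest.length : ℝ) + 1) * Real.sqrt n := by ring
    · rw [hcostF, hcost1, hcost_p]
      simp only [List.map_cons, List.sum_cons, List.length_cons]
      have hCc0 : 0 ≤ β * (Real.sqrt n) ^ m + K :=
        add_nonneg (mul_nonneg hβ (Real.rpow_nonneg (Real.sqrt_nonneg n) m)) hK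
      have hconn : ∫ s in S₀..(a - (τ:ℝ)), L (c₁ s) s (c₁' s)
          ≤ 2 * (β * (Real.sqrt n) ^ m + K) := by
        refine le_trans hcostc ?_
        have e : (a - (τ:ℝ)) - S₀ = d := by rw [hτa]; ring
        rw [e, mul_comm]
        exact mul_le_mul_of_nonneg_right hd2 hCc0
      push_cast
      linarith


theorem sum_ofFn_ite {G : Type*} [AddCommGroup G] {k : ℕ} (i₀ : Fin k) (f g : Fin k → G) :
    (List.ofFn fun i => if i = i₀ then f i else g i).sum = (∑ i, g i) - g i₀ + f i₀ := by
  classical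
  rw [List.sum_ofFn]
  have h1 : (∑ i, if i = i₀ then f i else g i) = ∑ i, (if i = i₀ then f i₀ else g i) :=
    Finset.sum_congr rfl (fun i _ => by
      by_cases h : i = i₀
      · rw [if_pos h, if_pos h, h]
      · rw [if_neg h, if_neg h])
  rw [h1, ← Finset.sum_erase_add _ _ (Finset.mem_univ i₀),
    ← Finset.sum_erase_add _ g (Finset.mem_univ i₀), if_pos rfl,
    Finset.sum_congr rfl (fun i hi => if_neg (Finset.ne_of_mem_erase hi))]
  abel


end BG
open BG

set_option maxHeartbeats 16000000 in
/-- Core estimate in the proof of superadditivity: pieces of a near-minimizer of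
`m(2t, 0, 2y)` selected by Burago's lemma can be rearranged (after integer space-time shifts and
straight connectors) into a competitor for `m(t, 0, y)`, at an additional cost of at most a
constant `C` depending only on `K, M, n, α, β, m`. -/
theorem mCost_le_sum_pieces (n : ℕ) (hn : 1 ≤ n) (α β K m : ℝ)
    (hα : 0 < α) (hβ : 0 < β) (hK : 0 < K) (hm : 1 < m) (M : ℝ) (hM : 0 < M) :
    ∃ C > 0,
      ∀ L : EuclideanSpace ℝ (Fin n) → ℝ → EuclideanSpace ℝ (Fin n) → ℝ,
        IsLagrangian n α β K m L →
        ∀ t : ℝ, 4 * ((n : ℝ) + 4) ^ 2 < t →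
          ∀ y : EuclideanSpace ℝ (Fin n), ‖y‖ ≤ M * t →
            ∀ η η' : ℝ → EuclideanSpace ℝ (Fin n),
              AdmissibleOn n 0 (2 * t) η η' → η 0 = 0 → η (2 * t) = (2 : ℝ) • y →
              IntervalIntegrable (fun s => L (η s) s (η' s)) volume 0 (2 * t) →
              (∫ s in (0:ℝ)..(2 * t), L (η s) s (η' s)) ≤
                mCost n L (2 * t) 0 ((2 : ℝ) • y) + 1 →
              ∀ k : ℕ, 0 < k → 2 * k ≤ n + 2 →
                ∀ a b : Fin k → ℝ,
                  (∀ i, 0 ≤ a i ∧ a i ≤ b i ∧ b i ≤ 2 * t) →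
                  (∀ i j, i ≠ j → Disjoint (Set.Ioo (a i) (b i)) (Set.Ioo (a j) (b j))) →
                  ∑ i, (η (b i) - η (a i)) = y →
                  ∑ i, (b i - a i) = t →
                  mCost n L t 0 y ≤
                    (∑ i, ∫ s in (a i)..(b i), L (η s) s (η' s)) + C := by
  classical
  have hn1 : (1:ℝ) ≤ (n:ℝ) := by exact_mod_cast hn
  have hm0 : (0:ℝ) ≤ m := by linarith
  -- the constants
  obtain ⟨C₁, hC₁⟩ : ∃ x : ℝ, x = (2*β*M^m + 5*K + 1)/α := ⟨_, rfl⟩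
  obtain ⟨C₂, hC₂⟩ : ∃ x : ℝ, x = C₁ * (((n:ℝ)+2) * ((n:ℝ)+6)) := ⟨_, rfl⟩
  obtain ⟨Rw, hRw⟩ : ∃ x : ℝ, x = C₂ + ((n:ℝ)+6) := ⟨_, rfl⟩
  obtain ⟨Vm, hVm⟩ : ∃ x : ℝ, x = ((n:ℝ)+4) * Real.sqrt n + Rw := ⟨_, rfl⟩
  obtain ⟨Cc, hCc⟩ : ∃ x : ℝ, x = 2*(β * Real.sqrt n ^ m + K) := ⟨_, rfl⟩
  obtain ⟨C, hC⟩ : ∃ x : ℝ, x = K*((n:ℝ)+6) + ((n:ℝ)+4)*Cc + (β * Vm^m + K)*((n:ℝ)+5) := ⟨_, rfl⟩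
  have hC₁0 : 0 ≤ C₁ := by
    rw [hC₁]
    apply div_nonneg _ hα.le
    have := Real.rpow_nonneg hM.le m
    nlinarith
  have hn20 : (0:ℝ) ≤ ((n:ℝ)+2) * ((n:ℝ)+6) := by positivity
  have hC₂0 : 0 ≤ C₂ := hC₂ ▸ mul_nonneg hC₁0 hn20
  have hRw0 : 0 ≤ Rw := by
    rw [hRw]; positivity
  have hVm0 : 0 ≤ Vm := by
    rw [hVm]
    have h1 := Real.sqrt_nonneg (n:ℝ)
    have h2 : (0:ℝ) ≤ ((n:ℝ)+4) * Real.sqrt n := by positivity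
    linarith
  have hCc0 : 0 ≤ Cc := by
    have h1 := Real.rpow_nonneg (Real.sqrt_nonneg (n:ℝ)) m
    have h2 : (0:ℝ) ≤ β * Real.sqrt (n:ℝ) ^ m := mul_nonneg hβ.le h1
    rw [hCc]; linarith
  have hCpos : 0 < C := by
    have h1 := Real.rpow_nonneg hVm0 m
    have h2 : (0:ℝ) ≤ β * Vm ^ m := mul_nonneg hβ.le h1
    have h3 : (0:ℝ) < K * ((n:ℝ)+6) := by positivity
    have h4 : (0:ℝ) ≤ ((n:ℝ)+4) * Cc := by positivity
    have h5 : (0:ℝ) < (β * Vm ^ m + K) * ((n:ℝ)+5) := by nlinarith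
    rw [hC]; linarith
  refine ⟨C, hCpos, ?_⟩
  intro L hL t ht y hy η η' hadm h0 h2t hLint hnear k hk hk2 a b hab hdisj hsumy hsumt
  have hLB : ∀ x s v, -K ≤ L x s v := by
    intro x s v
    have h1 := hL.lower_bound x s v
    have h2 := Real.rpow_nonneg (norm_nonneg v) m
    have h3 := mul_nonneg hα.le h2
    linarith
  have htn : 4*((n:ℝ)+4)^2 < t := ht
  have ht1 : (1:ℝ) ≤ t := by nlinarith [sq_nonneg ((n:ℝ)+4)]
  have ht0 : (0:ℝ) < t := by linarith
  have h2t0 : (0:ℝ) < 2*t := by linarith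
  -- Step A : upper bound for the total action of the near minimizer
  have hm2t : mCost n L (2*t) 0 ((2:ℝ) • y) ≤ (β * M ^ m + K) * (2*t - 0) := by
    have hspeed : ‖(2:ℝ) • y - 0‖ / (2*t - 0) ≤ M := by
      rw [sub_zero, sub_zero, norm_smul]
      simp only [Real.norm_ofNat]
      rw [div_le_iff₀ h2t0]
      calc (2:ℝ) * ‖y‖ ≤ 2 * (M * t) := by linarith [hy]
      _ = M * (2*t) := by ring
    obtain ⟨ξ, ξ', hadmL, hL0, hLT, hintL, hcostL⟩ :=
      line_spec hL hβ.le hm0 h2t0 (0 : BG.Euc n) ((2:ℝ) • y) hspeed hM.le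
    exact le_trans (mCost_le h2t0.le hLB hadmL hL0 hLT hintL) hcostL
  have htotal : (∫ s in (0:ℝ)..(2*t), L (η s) s (η' s)) ≤ 2*β*M^m*t + 2*K*t + 1 := by
    have := le_trans hnear (by linarith [hm2t] : mCost n L (2*t) 0 ((2:ℝ) • y) + 1 ≤ (β * M ^ m + K) * (2*t - 0) + 1)
    calc (∫ s in (0:ℝ)..(2*t), L (η s) s (η' s)) ≤ (β * M ^ m + K) * (2*t - 0) + 1 := this
    _ = 2*β*M^m*t + 2*K*t + 1 := by ring
  -- Step B : integrability and bound for ∫ ‖η'‖^m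
  have hcont_pow : Continuous fun r : ℝ => r ^ m :=
    continuous_iff_continuousAt.2 fun x => Real.continuousAt_rpow_const x m (Or.inr hm0)
  have hIm : IntervalIntegrable (fun s => ‖η' s‖ ^ m) volume 0 (2*t) := by
    have hmeas : AEStronglyMeasurable η' (volume.restrict (Set.uIoc 0 (2*t))) :=
      (intervalIntegrable_iff.1 hadm.1).aestronglyMeasurable
    have hG : IntervalIntegrable (fun s => (1/α) * (L (η s) s (η' s) + K)) volume 0 (2*t) :=
      (hLint.add intervalIntegrable_const).const_mul _
    refine hG.mono_fun ((hcont_pow.comp continuous_norm).comp_aestronglyMeasurable hmeas)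
      (Eventually.of_forall fun s => ?_)
    have h1 := hL.lower_bound (η s) s (η' s)
    have h2 := Real.rpow_nonneg (norm_nonneg (η' s)) m
    have h3 : ‖η' s‖ ^ m ≤ (1/α) * (L (η s) s (η' s) + K) := by
      rw [one_div, inv_mul_eq_div, le_div_iff₀ hα, mul_comm]
      linarith
    have h4 : (0:ℝ) ≤ (1/α) * (L (η s) s (η' s) + K) := le_trans h2 h3
    simp only [Real.norm_eq_abs]
    rw [abs_of_nonneg h2, abs_of_nonneg h4]
    exact h3
  have hImb : (∫ s in (0:ℝ)..(2*t), ‖η' s‖ ^ m) ≤ C₁ * t := by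
    have hmono : (∫ s in (0:ℝ)..(2*t), α * ‖η' s‖ ^ m)
        ≤ ∫ s in (0:ℝ)..(2*t), (L (η s) s (η' s) + K) := by
      refine intervalIntegral.integral_mono_on h2t0.le (hIm.const_mul α)
        (hLint.add intervalIntegrable_const) fun s _ => ?_
      linarith [hL.lower_bound (η s) s (η' s)]
    rw [intervalIntegral.integral_const_mul] at hmono
    rw [intervalIntegral.integral_add hLint intervalIntegrable_const,
      intervalIntegral.integral_const] at hmono
    have hKt : (2*t - 0) • K = 2*K*t := by rw [smul_eq_mul]; ring
    rw [hKt] at hmono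
    -- α * ∫ g ≤ total + 2Kt ≤ 2βM^m t + 4Kt + 1 ≤ α * (C₁ t)
    have hval : α * (C₁ * t) = (2*β*M^m + 5*K + 1) * t := by
      rw [hC₁]; field_simp
    have : α * (∫ s in (0:ℝ)..(2*t), ‖η' s‖ ^ m) ≤ α * (C₁ * t) := by
      rw [hval]
      nlinarith [htotal, hK, ht1]
    exact le_of_mul_le_mul_left this hα

  -- Step C : select the longest piece
  have hk0 : (0:ℝ) < (k:ℝ) := by exact_mod_cast hk
  have hkn : 2*(k:ℝ) ≤ (n:ℝ) + 2 := by exact_mod_cast hk2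
  obtain ⟨i₀, hi₀⟩ : ∃ i : Fin k, t/(k:ℝ) ≤ b i - a i := by
    by_contra hcon
    push_neg at hcon
    have hlt := Finset.sum_lt_sum_of_nonempty
      (⟨⟨0, hk⟩, Finset.mem_univ _⟩ : (Finset.univ : Finset (Fin k)).Nonempty)
      (fun i _ => hcon i)
    rw [hsumt, Finset.sum_const, Finset.card_univ, Fintype.card_fin, nsmul_eq_mul] at hlt
    rw [mul_div_cancel₀ t hk0.ne'] at hlt
    exact lt_irrefl t hlt
  obtain ⟨τw, hτw⟩ : ∃ x : ℝ, x = 2*(k:ℝ) + 4 := ⟨_, rfl⟩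
  have hτw0 : (0:ℝ) < τw := by rw [hτw]; linarith
  have hτwn : τw ≤ (n:ℝ) + 6 := by rw [hτw]; linarith
  have hkτw : 8 * ((k:ℝ) * τw) ≤ t := by
    rw [hτw]
    nlinarith
  have hbai : 2*τw ≤ b i₀ - a i₀ := by
    have h1 : 2*τw * (k:ℝ) ≤ t := by nlinarith
    have h2 : 2*τw ≤ t/(k:ℝ) := by
      rw [le_div_iff₀ hk0]
      exact h1
    linarith
  have hai0 : 0 ≤ a i₀ := (hab i₀).1
  have haibi : a i₀ ≤ b i₀ := (hab i₀).2.1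
  have hbi2t : b i₀ ≤ 2*t := (hab i₀).2.2
  -- Step D : choose a cheap window inside the longest piece
  obtain ⟨N, hN⟩ : ∃ N : ℕ, N = ⌊(b i₀ - a i₀)/τw⌋₊ := ⟨_, rfl⟩
  have hNle : (N:ℝ) ≤ (b i₀ - a i₀)/τw := by
    rw [hN]
    exact Nat.floor_le (div_nonneg (by linarith) hτw0.le)
  have hNlt : (b i₀ - a i₀)/τw < (N:ℝ) + 1 := by
    rw [hN]
    exact Nat.lt_floor_add_one _
  have hNτ : (N:ℝ) * τw ≤ b i₀ - a i₀ := by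
    rw [← le_div_iff₀ hτw0] at *
    exact hNle
  have hN0 : 0 < N := by
    by_contra hcon
    push_neg at hcon
    interval_cases N
    · simp only [Nat.cast_zero] at hNlt
      rw [div_lt_iff₀ hτw0] at hNlt
      linarith
  have hNC : C₁ * t ≤ (N:ℝ) * C₂ := by
    -- (N+1) τw > b - a ≥ t/k  so  N * (2 k τw) ≥ t
    have h1 : t ≤ (k:ℝ) * (b i₀ - a i₀) := by
      rw [div_le_iff₀ hk0] at hi₀
      linarith [hi₀]
    have h2 : b i₀ - a i₀ < ((N:ℝ)+1) * τw := by
      rw [div_lt_iff₀ hτw0] at hNlt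
      linarith
    have hkτpos : (0:ℝ) < (k:ℝ) * τw := by positivity
    have h3 : t ≤ (N:ℝ) * (2 * ((k:ℝ) * τw)) := by nlinarith
    have h4 : C₁ * (2 * ((k:ℝ) * τw)) ≤ C₂ := by
      rw [hC₂, hτw]
      have : 2 * ((k:ℝ) * (2*(k:ℝ)+4)) ≤ ((n:ℝ)+2) * ((n:ℝ)+6) := by nlinarith
      nlinarith
    calc C₁ * t ≤ C₁ * ((N:ℝ) * (2 * ((k:ℝ) * τw))) := by nlinarith
    _ = (N:ℝ) * (C₁ * (2 * ((k:ℝ) * τw))) := by ring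
    _ ≤ (N:ℝ) * C₂ := by
        have hN0' : (0:ℝ) ≤ (N:ℝ) := Nat.cast_nonneg _
        nlinarith
  -- the windows
  obtain ⟨cf, hcf⟩ : ∃ f : ℕ → ℝ, f = fun j : ℕ => a i₀ + j * τw := ⟨_, rfl⟩
  have hcf0 : cf 0 = a i₀ := by rw [hcf]; simp
  have hcfs : ∀ j : ℕ, cf (j+1) = cf j + τw := by
    intro j; rw [hcf]; push_cast; ring
  have hcfmono : ∀ j : ℕ, a i₀ ≤ cf j := by
    intro j; rw [hcf]
    have : (0:ℝ) ≤ (j:ℝ) * τw := by positivity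
    simp only
    linarith
  have hcfN : ∀ j : ℕ, j ≤ N → cf j ≤ b i₀ := by
    intro j hj
    rw [hcf]
    simp only
    have h1 : (j:ℝ) ≤ (N:ℝ) := by exact_mod_cast hj
    have h2 : (j:ℝ)*τw ≤ (N:ℝ)*τw := by nlinarith
    linarith [hNτ]
  have hsub2t : ∀ j : ℕ, j ≤ N → cf j ∈ Set.Icc (0:ℝ) (2*t) := by
    intro j hj
    exact ⟨le_trans hai0 (hcfmono j), le_trans (hcfN j hj) hbi2t⟩
  have hsubW : ∀ p q : ℝ, p ∈ Set.Icc (0:ℝ) (2*t) → q ∈ Set.Icc (0:ℝ) (2*t) →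
      Set.uIcc p q ⊆ Set.uIcc 0 (2*t) := by
    intro p q hp hq
    rw [Set.uIcc_of_le (by linarith : (0:ℝ) ≤ 2*t)]
    exact Set.uIcc_subset_Icc hp hq
  have hWint : ∀ j < N, IntervalIntegrable (fun s => ‖η' s‖ ^ m) volume (cf j) (cf (j+1)) := by
    intro j hj
    exact hIm.mono_set (hsubW _ _ (hsub2t j hj.le) (hsub2t (j+1) hj))
  have hadjsum : ∑ j ∈ Finset.range N, (∫ s in (cf j)..(cf (j+1)), ‖η' s‖ ^ m)
      = ∫ s in (cf 0)..(cf N), ‖η' s‖ ^ m :=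
    intervalIntegral.sum_integral_adjacent_intervals hWint
  have hgnonneg : ∀ (p q : ℝ), p ≤ q → 0 ≤ ∫ s in p..q, ‖η' s‖ ^ m := by
    intro p q hpq
    exact intervalIntegral.integral_nonneg hpq
      (fun u _ => Real.rpow_nonneg (norm_nonneg _) m)
  have hwhole : (∫ s in (cf 0)..(cf N), ‖η' s‖ ^ m) ≤ C₁ * t := by
    have hcf0N : cf 0 ≤ cf N := by
      rw [hcf0]
      exact hcfmono N
    have i1 : IntervalIntegrable (fun s => ‖η' s‖ ^ m) volume 0 (cf 0) :=
      hIm.mono_set (hsubW _ _ ⟨le_rfl, by linarith⟩ (hsub2t 0 (Nat.zero_le _)))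
    have i2 : IntervalIntegrable (fun s => ‖η' s‖ ^ m) volume (cf 0) (cf N) :=
      hIm.mono_set (hsubW _ _ (hsub2t 0 (Nat.zero_le _)) (hsub2t N le_rfl))
    have i3 : IntervalIntegrable (fun s => ‖η' s‖ ^ m) volume (cf N) (2*t) :=
      hIm.mono_set (hsubW _ _ (hsub2t N le_rfl) ⟨by linarith, le_rfl⟩)
    have e1 : (∫ s in (0:ℝ)..(cf 0), ‖η' s‖ ^ m) + (∫ s in (cf 0)..(cf N), ‖η' s‖ ^ m)
        = ∫ s in (0:ℝ)..(cf N), ‖η' s‖ ^ m :=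
      intervalIntegral.integral_add_adjacent_intervals i1 i2
    have e2 : (∫ s in (0:ℝ)..(cf N), ‖η' s‖ ^ m) + (∫ s in (cf N)..(2*t), ‖η' s‖ ^ m)
        = ∫ s in (0:ℝ)..(2*t), ‖η' s‖ ^ m :=
      intervalIntegral.integral_add_adjacent_intervals (i1.trans i2) i3
    have n1 : 0 ≤ ∫ s in (0:ℝ)..(cf 0), ‖η' s‖ ^ m :=
      hgnonneg _ _ (le_trans hai0 (by rw [hcf0]))
    have n2 : 0 ≤ ∫ s in (cf N)..(2*t), ‖η' s‖ ^ m :=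
      hgnonneg _ _ (le_trans (hcfN N le_rfl) hbi2t)
    linarith [hImb]
  obtain ⟨j, hjN, hjwin⟩ : ∃ j, j < N ∧ (∫ s in (cf j)..(cf (j+1)), ‖η' s‖ ^ m) ≤ C₂ := by
    by_contra hcon
    push_neg at hcon
    have hlt := Finset.sum_lt_sum_of_nonempty
      (⟨0, Finset.mem_range.2 hN0⟩ : (Finset.range N).Nonempty)
      (fun j hj => hcon j (Finset.mem_range.1 hj))
    rw [Finset.sum_const, Finset.card_range, nsmul_eq_mul, hadjsum] at hlt
    linarith [hwhole, hNC]
  obtain ⟨c, hc⟩ : ∃ x : ℝ, x = cf j := ⟨_, rfl⟩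
  have hcτ : c + τw = cf (j+1) := by rw [hc, hcfs]
  have hcai : a i₀ ≤ c := by rw [hc]; exact hcfmono j
  have hcbi : c + τw ≤ b i₀ := by rw [hcτ]; exact hcfN (j+1) hjN
  have hc2t : c ∈ Set.Icc (0:ℝ) (2*t) := by rw [hc]; exact hsub2t j hjN.le
  have hcτ2t : c + τw ∈ Set.Icc (0:ℝ) (2*t) := by rw [hcτ]; exact hsub2t (j+1) hjN
  have hwinm : (∫ s in c..(c+τw), ‖η' s‖ ^ m) ≤ C₂ := by rw [hcτ, hc]; exact hjwin
  -- Step E : displacement over the window is bounded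
  have hdispw : ‖η (c+τw) - η c‖ ≤ Rw := by
    have hrepw : η (c+τw) = η c + ∫ s in c..(c+τw), η' s := rep_sub hadm hc2t hcτ2t
    have hWi : IntervalIntegrable η' volume c (c+τw) :=
      hadm.1.mono_set (hsubW _ _ hc2t hcτ2t)
    have hWg : IntervalIntegrable (fun s => ‖η' s‖ ^ m) volume c (c+τw) :=
      hIm.mono_set (hsubW _ _ hc2t hcτ2t)
    have h1 : ‖η (c+τw) - η c‖ = ‖∫ s in c..(c+τw), η' s‖ := by rw [hrepw]; simp
    have h2 : ‖∫ s in c..(c+τw), η' s‖ ≤ ∫ s in c..(c+τw), ‖η' s‖ :=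
      intervalIntegral.norm_integral_le_integral_norm (by linarith)
    have h3 : (∫ s in c..(c+τw), ‖η' s‖) ≤ ∫ s in c..(c+τw), (‖η' s‖ ^ m + 1) := by
      refine intervalIntegral.integral_mono_on (by linarith) hWi.norm
        (hWg.add intervalIntegrable_const) fun s _ => ?_
      rcases le_or_gt ‖η' s‖ 1 with hs | hs
      · have := Real.rpow_nonneg (norm_nonneg (η' s)) m
        linarith
      · have h5 : ‖η' s‖ ^ (1:ℝ) ≤ ‖η' s‖ ^ m :=
          Real.rpow_le_rpow_of_exponent_le hs.le (by linarith)
        rw [Real.rpow_one] at h5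
        linarith
    have h6 : (∫ s in c..(c+τw), (‖η' s‖ ^ m + 1))
        = (∫ s in c..(c+τw), ‖η' s‖ ^ m) + τw := by
      rw [intervalIntegral.integral_add hWg intervalIntegrable_const,
        intervalIntegral.integral_const]
      simp
    rw [hRw]
    calc ‖η (c+τw) - η c‖ ≤ (∫ s in c..(c+τw), ‖η' s‖ ^ m) + τw := by
          rw [h1]; linarith
    _ ≤ C₂ + ((n:ℝ)+6) := by linarith

  -- Step F : build the modified list of pieces
  obtain ⟨pf, hpf⟩ : ∃ f : Fin k → ℝ × ℝ,
      f = fun i => if i = i₀ then (a i, c) else (a i, b i) := ⟨_, rfl⟩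
  obtain ⟨pcs, hpcsdef⟩ : ∃ l : List (ℝ × ℝ), l = List.ofFn pf ++ [(c + τw, b i₀)] := ⟨_, rfl⟩
  have hpcs : ∀ p ∈ pcs, 0 ≤ p.1 ∧ p.1 ≤ p.2 ∧ p.2 ≤ 2*t := by
    intro p hp
    rw [hpcsdef] at hp
    rcases List.mem_append.1 hp with hp | hp
    · rw [List.mem_ofFn] at hp
      obtain ⟨i, rfl⟩ := hp
      rw [hpf]
      by_cases hi : i = i₀
      · simp only [if_pos hi]
        subst hi
        exact ⟨(hab i).1, hcai, hc2t.2⟩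
      · simp only [if_neg hi]
        exact hab i
    · rw [List.mem_singleton] at hp
      subst hp
      exact ⟨hcτ2t.1, hcbi, hbi2t⟩
  have hlen : ((pcs.length : ℝ)) = (k:ℝ) + 1 := by
    rw [hpcsdef]
    simp
  have hsl : (pcs.map (fun p => p.2 - p.1)).sum = t - τw := by
    rw [hpcsdef, List.map_append, List.sum_append, List.map_ofFn]
    have e1 : ((fun p : ℝ × ℝ => p.2 - p.1) ∘ pf)
        = fun i => if i = i₀ then (c - a i) else (b i - a i) := by
      funext i
      rw [hpf]
      by_cases h : i = i₀ <;> simp [h]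
    rw [e1, sum_ofFn_ite i₀ (fun i => c - a i) (fun i => b i - a i)]
    simp only [List.map_cons, List.map_nil, List.sum_cons, List.sum_nil]
    rw [hsumt]
    ring
  have hsy : (pcs.map (fun p => η p.2 - η p.1)).sum = y - (η (c+τw) - η c) := by
    rw [hpcsdef, List.map_append, List.sum_append, List.map_ofFn]
    have e1 : ((fun p : ℝ × ℝ => η p.2 - η p.1) ∘ pf)
        = fun i => if i = i₀ then (η c - η (a i)) else (η (b i) - η (a i)) := by
      funext i
      rw [hpf]
      by_cases h : i = i₀ <;> simp [h]
    rw [e1, sum_ofFn_ite i₀ (fun i => η c - η (a i)) (fun i => η (b i) - η (a i))]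
    simp only [List.map_cons, List.map_nil, List.sum_cons, List.sum_nil]
    rw [hsumy]
    abel
  have hi0c : IntervalIntegrable (fun s => L (η s) s (η' s)) volume (a i₀) c :=
    hLint.mono_set (hsubW _ _ ⟨hai0, by linarith⟩ hc2t)
  have hiwin : IntervalIntegrable (fun s => L (η s) s (η' s)) volume c (c+τw) :=
    hLint.mono_set (hsubW _ _ hc2t hcτ2t)
  have hicb : IntervalIntegrable (fun s => L (η s) s (η' s)) volume (c+τw) (b i₀) :=
    hLint.mono_set (hsubW _ _ hcτ2t ⟨by linarith [hcτ2t.1], hbi2t⟩)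
  have hsplit_i0 : (∫ s in (a i₀)..(b i₀), L (η s) s (η' s))
      = (∫ s in (a i₀)..c, L (η s) s (η' s)) + (∫ s in c..(c+τw), L (η s) s (η' s))
        + (∫ s in (c+τw)..(b i₀), L (η s) s (η' s)) := by
    rw [intervalIntegral.integral_add_adjacent_intervals hi0c hiwin,
      intervalIntegral.integral_add_adjacent_intervals (hi0c.trans hiwin) hicb]
  have hsc : (pcs.map (fun p => ∫ s in p.1..p.2, L (η s) s (η' s))).sum
      = (∑ i, ∫ s in (a i)..(b i), L (η s) s (η' s))
        - ∫ s in c..(c+τw), L (η s) s (η' s) := by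
    rw [hpcsdef, List.map_append, List.sum_append, List.map_ofFn]
    have e1 : ((fun p : ℝ × ℝ => ∫ s in p.1..p.2, L (η s) s (η' s)) ∘ pf)
        = fun i => if i = i₀ then (∫ s in (a i)..c, L (η s) s (η' s))
            else (∫ s in (a i)..(b i), L (η s) s (η' s)) := by
      funext i
      rw [hpf]
      by_cases h : i = i₀ <;> simp [h]
    rw [e1, sum_ofFn_ite i₀ _ _]
    simp only [List.map_cons, List.map_nil, List.sum_cons, List.sum_nil]
    rw [hsplit_i0]
    ring
  have hwinL : -(K*τw) ≤ ∫ s in c..(c+τw), L (η s) s (η' s) := by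
    have h1 : (∫ s in c..(c+τw), (-K : ℝ)) ≤ ∫ s in c..(c+τw), L (η s) s (η' s) :=
      intervalIntegral.integral_mono_on (by linarith) intervalIntegrable_const hiwin
        (fun s _ => hLB _ _ _)
    rw [intervalIntegral.integral_const, smul_eq_mul] at h1
    calc -(K*τw) = (c + τw - c) * (-K) := by ring
    _ ≤ _ := h1
  -- Step G : apply the block construction
  obtain ⟨ξ, ξ', S₁, hS₁l, hS₁u, hadmB, hstart, hdrift, hintB, hcostB⟩ :=
    blocks_spec hL hβ.le hm0 hK.le hadm hLint pcs hpcs 0 0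
  rw [hsl, hlen] at hS₁l hS₁u
  rw [hsy, hlen] at hdrift
  rw [hsc, hlen] at hcostB
  have hS₁0 : (0:ℝ) ≤ S₁ := by
    have h9 : 0 + (t - τw) + ((k:ℝ)+1) ≤ S₁ := hS₁l
    rw [hτw] at h9
    have h8 : ((n:ℝ)+4) ≤ ((n:ℝ)+4)^2 := by nlinarith only [hn1]
    linarith only [h9, h8, hkn, htn, hn1]
  have hS₁t : S₁ < t := by
    have : S₁ ≤ 0 + (t - τw) + 2*((k:ℝ)+1) := hS₁u
    rw [hτw] at this
    linarith
  have htS₁2 : 2 ≤ t - S₁ := by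
    have : S₁ ≤ 0 + (t - τw) + 2*((k:ℝ)+1) := hS₁u
    rw [hτw] at this
    linarith
  have htS₁u : t - S₁ ≤ (n:ℝ) + 5 := by
    have : 0 + (t - τw) + ((k:ℝ)+1) ≤ S₁ := hS₁l
    rw [hτw] at this
    linarith
  -- Step H : the final connector
  have hyfar : ‖y - ξ S₁‖ ≤ ((k:ℝ)+1) * Real.sqrt n + Rw := by
    have e : y - ξ S₁ = -(ξ S₁ - (0 + (y - (η (c+τw) - η c)))) + (η (c+τw) - η c) := by
      abel
    rw [e]
    calc ‖-(ξ S₁ - (0 + (y - (η (c+τw) - η c)))) + (η (c+τw) - η c)‖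
        ≤ ‖-(ξ S₁ - (0 + (y - (η (c+τw) - η c))))‖ + ‖η (c+τw) - η c‖ :=
          norm_add_le _ _
    _ ≤ ((k:ℝ)+1) * Real.sqrt n + Rw := by
        rw [norm_neg]
        exact add_le_add hdrift hdispw
  have hspeedF : ‖y - ξ S₁‖ / (t - S₁) ≤ Vm := by
    have h1 : ‖y - ξ S₁‖ / (t - S₁) ≤ ‖y - ξ S₁‖ :=
      div_le_self (norm_nonneg _) (by linarith)
    have h2 : ((k:ℝ)+1) * Real.sqrt n ≤ ((n:ℝ)+4) * Real.sqrt n :=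
      mul_le_mul_of_nonneg_right (by linarith only [hkn, hn1]) (Real.sqrt_nonneg _)
    rw [hVm]
    linarith
  obtain ⟨χ, χ', hadmC, hχ0, hχt, hintC, hcostC⟩ :=
    line_spec hL hβ.le hm0 hS₁t (ξ S₁) y hspeedF hVm0
  -- Step I : glue and conclude
  obtain ⟨ζ, ζ', hadmF, hζ0, hζt, hintF, hcostF⟩ :=
    glue_spec hS₁0 hS₁t.le hadmB hadmC hχ0.symm hintB hintC
  have hζ00 : ζ 0 = 0 := by rw [hζ0, hstart]
  have hζtt : ζ t = y := by rw [hζt, hχt]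
  have hfinal := mCost_le ht0.le hLB hadmF hζ00 hζtt hintF
  rw [hcostF] at hfinal
  -- cost comparisons
  have hcB : (∫ s in (0:ℝ)..S₁, L (ξ s) s (ξ' s))
      ≤ (∑ i, ∫ s in (a i)..(b i), L (η s) s (η' s)) + K*τw + ((k:ℝ)+1) * Cc := by
    rw [hCc]
    linarith only [hcostB, hwinL]
  have hcC : (∫ s in S₁..t, L (χ s) s (χ' s)) ≤ (β * Vm^m + K) * ((n:ℝ)+5) := by
    refine le_trans hcostC ?_
    have h1 : (0:ℝ) ≤ β * Vm^m + K := by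
      have h2 := Real.rpow_nonneg hVm0 m
      have h3 : (0:ℝ) ≤ β * Vm^m := mul_nonneg hβ.le h2
      linarith only [h3, hK]
    exact mul_le_mul_of_nonneg_left htS₁u h1
  have hkCc : ((k:ℝ)+1) * Cc ≤ ((n:ℝ)+4) * Cc :=
    mul_le_mul_of_nonneg_right (by linarith only [hkn, hn1]) hCc0
  have hKτw : K*τw ≤ K*((n:ℝ)+6) := mul_le_mul_of_nonneg_left hτwn hK.le
  rw [hC]
  linarith only [hfinal, hcB, hcC, hkCc, hKτw]




end
end
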